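/- Let X₂ = ℕ → Fin 2 and let a, b be bijective isometries of X₂ satisfying for all x ∈ X₂: a(0⌢x) = 0⌢x, a(1⌢x) = 1⌢(b x), b(0⌢x) = 1⌢x, b(1⌢x) = 0⌢(a x) (these recursions determine a and b uniquely; the subgroup ⟨a, b⟩ they generate is the Basilica group ℬ). Then {μ₂(Fix(g)) : g ∈ ⟨a, b⟩} = {t ∈ ℝ : 0 ≤ t ≤ 1 and t = p/2^n for some integers p ≥ 0, n ≥ 0}, the set of dyadic rationals in [0,1]. -/

import Mathlib

open Set MeasureTheory TopologicalSpace

noncomputable section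

/-- The boundary of the `d`-regular rooted tree: infinite words over a `d`-letter alphabet. -/
abbrev XX (d : ℕ) : Type := ℕ → Fin d

/-- The standard ultrametric: `dist x y = (1/2)^n` where `n` is the first index where `x,y`
differ. -/
noncomputable instance XXms (d : ℕ) : MetricSpace (XX d) := PiNat.metricSpace

/-- The cylinder determined by a finite word `w`: all infinite words starting with `w`. -/
def Cyl {d : ℕ} (w : List (Fin d)) : Set (XX d) :=
  {x | ∀ i : Fin w.length, x i.1 = w.get i}

/-- `G` acts transitively on every level of the tree. -/
def LevelTransitive {d : ℕ} (G : Subgroup (XX d ≃ᵢ XX d)) : Prop :=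
  ∀ u v : List (Fin d), u.length = v.length →
    ∃ g ∈ G, (g : XX d ≃ᵢ XX d) '' Cyl u = Cyl v

/-- The rigid stabilizer of the vertex (finite word) `v`: elements of `G` supported in
`Cyl v`. -/
def rist {d : ℕ} (G : Subgroup (XX d ≃ᵢ XX d)) (v : List (Fin d)) :
    Set (XX d ≃ᵢ XX d) :=
  {g | g ∈ G ∧ ∀ x : XX d, g x ≠ x → x ∈ Cyl v}

/-- The rigid stabilizer of level `n`: the subgroup generated by the rigid stabilizers of
all vertices of level `n`. -/
def ristLevel {d : ℕ} (G : Subgroup (XX d ≃ᵢ XX d)) (n : ℕ) :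
    Subgroup (XX d ≃ᵢ XX d) :=
  Subgroup.closure (⋃ v ∈ {w : List (Fin d) | w.length = n}, rist G v)

/-- A weakly branch group: level-transitive with all rigid vertex stabilizers nontrivial. -/
def WeaklyBranch {d : ℕ} (G : Subgroup (XX d ≃ᵢ XX d)) : Prop :=
  LevelTransitive G ∧ ∀ v : List (Fin d), ∃ g ∈ rist G v, g ≠ 1

/-- A branch group: weakly branch and every rigid level stabilizer has finite index. -/
def Branch {d : ℕ} (G : Subgroup (XX d ≃ᵢ XX d)) : Prop :=
  WeaklyBranch G ∧ ∀ n : ℕ, (ristLevel G n).index ≠ 0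

/-- The infinite word with first letter `i` followed by `x` (`i⌢x`). -/
def consW {d : ℕ} (i : Fin d) (x : XX d) : XX d :=
  fun n => Nat.casesOn n i x


namespace S15

abbrev G2 : Type := XX 2 ≃ᵢ XX 2

/-- prepend a finite word -/
def extW : List (Fin 2) → XX 2 → XX 2
  | [], x => x
  | i :: w, x => consW i (extW w x)

@[simp] lemma extW_nil (x : XX 2) : extW [] x = x := rfl
@[simp] lemma extW_cons (i : Fin 2) (w : List (Fin 2)) (x : XX 2) :
    extW (i :: w) x = consW i (extW w x) := rfl

lemma extW_append (w v : List (Fin 2)) (x : XX 2) :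
    extW (w ++ v) x = extW w (extW v x) := by
  induction w with
  | nil => rfl
  | cons i w ih => simp [extW, ih]

@[simp] lemma consW_zero (i : Fin 2) (x : XX 2) : consW i x 0 = i := rfl
@[simp] lemma consW_succ (i : Fin 2) (x : XX 2) (n : ℕ) : consW i x (n+1) = x n := rfl

lemma consW_inj {i j : Fin 2} {x y : XX 2} (h : consW i x = consW j y) :
    i = j ∧ x = y := by
  constructor
  · have := congrFun h 0; simpa using this
  · funext n; have := congrFun h (n+1); simpa using this

lemma consW_eta (x : XX 2) : consW (x 0) (fun n => x (n+1)) = x := by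
  funext n; cases n <;> rfl

lemma consW_ne_of_ne {i j : Fin 2} (h : i ≠ j) (x y : XX 2) :
    consW i x ≠ consW j y := fun hc => h (consW_inj hc).1

lemma extW_inj {w : List (Fin 2)} {x y : XX 2} (h : extW w x = extW w y) : x = y := by
  induction w with
  | nil => exact h
  | cons i w ih => exact ih (consW_inj h).2

lemma extW_ne {w w' : List (Fin 2)} (hl : w.length = w'.length) (hne : w ≠ w')
    (x y : XX 2) : extW w x ≠ extW w' y := by
  induction w generalizing w' with
  | nil => cases w' with
    | nil => exact absurd rfl hne
    | cons j v => simp at hl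
  | cons i w ih =>
    cases w' with
    | nil => simp at hl
    | cons j v =>
      intro hc
      obtain ⟨h1, h2⟩ := consW_inj hc
      subst h1
      rcases eq_or_ne w v with rfl | hv
      · exact hne rfl
      · exact ih (by simpa using hl) hv h2

-- Cylinder lemmas
lemma mem_Cyl_iff {w : List (Fin 2)} {x : XX 2} :
    x ∈ Cyl w ↔ ∃ y, x = extW w y := by
  induction w generalizing x with
  | nil =>
    simp only [Cyl, List.length_nil]
    constructor
    · intro _; exact ⟨x, rfl⟩
    · intro _ i; exact absurd i.2 (Nat.not_lt_zero _)
  | cons i w ih =>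
    constructor
    · intro hx
      have h0 : x 0 = i := hx ⟨0, by simp⟩
      have htl : (fun n => x (n+1)) ∈ Cyl w := by
        intro ⟨k, hk⟩
        have := hx ⟨k+1, by simpa using Nat.succ_lt_succ hk⟩
        simpa using this
      obtain ⟨y, hy⟩ := ih.1 htl
      exact ⟨y, by rw [extW_cons, ← hy, ← h0, consW_eta]⟩
    · rintro ⟨y, rfl⟩
      intro ⟨k, hk⟩
      cases k with
      | zero => rfl
      | succ k =>
        have hk' : k < w.length := by simpa using hk
        have := ih.2 ⟨y, rfl⟩
        exact this ⟨k, hk'⟩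

lemma Cyl_eq_image (w : List (Fin 2)) : Cyl w = extW w '' univ := by
  ext x; rw [mem_Cyl_iff]
  simp [eq_comm]

lemma measurable_Cyl (w : List (Fin 2)) : MeasurableSet (Cyl w) := by
  have : Cyl w = ⋂ i : Fin w.length, (fun x : XX 2 => x i.1) ⁻¹' {w.get i} := by
    ext x; simp [Cyl]
  rw [this]
  exact MeasurableSet.iInter fun i => (measurable_pi_apply _) (measurableSet_singleton _)

lemma Cyl_disjoint {w w' : List (Fin 2)} (hl : w.length = w'.length) (hne : w ≠ w') :
    Disjoint (Cyl w) (Cyl w') := by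
  rw [Set.disjoint_left]
  rintro x hx hx'
  obtain ⟨y, rfl⟩ := mem_Cyl_iff.1 hx
  obtain ⟨z, hz⟩ := mem_Cyl_iff.1 hx'
  exact extW_ne hl hne y z hz

lemma Cyl_nil : Cyl ([] : List (Fin 2)) = univ := by
  ext x
  constructor
  · intro _; trivial
  · intro _ i; exact absurd i.2 (Nat.not_lt_zero _)

-- helper application lemmas
lemma mul_app (g h : G2) (x : XX 2) : (g * h) x = g (h x) := rfl
lemma one_app (x : XX 2) : (1 : G2) x = x := rfl
lemma inv_app (g : G2) (x : XX 2) : g⁻¹ x = g.symm x := rfl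
lemma apply_inv_apply (g : G2) (x : XX 2) : g (g⁻¹ x) = x := by
  rw [inv_app]; exact g.apply_symm_apply x
lemma inv_apply_apply (g : G2) (x : XX 2) : g⁻¹ (g x) = x := by
  rw [inv_app]; exact g.symm_apply_apply x

structure Bas : Type where
  a : G2
  b : G2
  ha0 : ∀ x : XX 2, a (consW 0 x) = consW 0 x
  ha1 : ∀ x : XX 2, a (consW 1 x) = consW 1 (b x)
  hb0 : ∀ x : XX 2, b (consW 0 x) = consW 1 x
  hb1 : ∀ x : XX 2, b (consW 1 x) = consW 0 (a x)

namespace Bas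

variable (H : Bas)

lemma ia0 (x : XX 2) : H.a⁻¹ (consW 0 x) = consW 0 x := by
  apply H.a.injective
  rw [show ∀ y, H.a y = H.a y from fun _ => rfl] -- no-op
  rw [apply_inv_apply, H.ha0]

lemma ia1 (x : XX 2) : H.a⁻¹ (consW 1 x) = consW 1 (H.b⁻¹ x) := by
  apply H.a.injective
  rw [apply_inv_apply, H.ha1, apply_inv_apply]

lemma ib0 (x : XX 2) : H.b⁻¹ (consW 0 x) = consW 1 (H.a⁻¹ x) := by
  apply H.b.injective
  rw [apply_inv_apply, H.hb1, apply_inv_apply]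

lemma ib1 (x : XX 2) : H.b⁻¹ (consW 1 x) = consW 0 x := by
  apply H.b.injective
  rw [apply_inv_apply, H.hb0]

/-- the nucleus -/
def Nuc : Set G2 := {1, H.a, H.a⁻¹, H.b, H.b⁻¹, H.a * H.b⁻¹, H.b * H.a⁻¹}

/-- `g` maps every cylinder of level `n` onto a cylinder of level `n`, acting by a
nucleus element. -/
def Tr (g : G2) (n : ℕ) : Prop :=
  ∀ w : List (Fin 2), w.length = n →
    ∃ w' u, w'.length = n ∧ u ∈ H.Nuc ∧ ∀ x, g (extW w x) = extW w' (u x)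

def CT (g : G2) : Prop := ∃ n, H.Tr g n

def PF (g : G2) (w : List (Fin 2)) : Prop := ∀ x, g (extW w x) = extW w x
def Mv (g : G2) (w : List (Fin 2)) : Prop := ∀ x y, g (extW w x) ≠ extW w y

end Bas

namespace Bas

variable (H : Bas)

lemma tr2_core (g : G2)
    (h : ∀ i j : Fin 2, ∃ (i' j' : Fin 2) (u : G2), u ∈ H.Nuc ∧
      ∀ x, g (consW i (consW j x)) = consW i' (consW j' (u x))) :
    H.Tr g 2 := by
  intro w hw
  rcases w with _ | ⟨i, _ | ⟨j, _ | ⟨k, w⟩⟩⟩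
  · simp at hw
  · simp at hw
  · obtain ⟨i', j', u, hu, hx⟩ := h i j
    exact ⟨[i', j'], u, rfl, hu, fun x => hx x⟩
  · simp at hw

end Bas

namespace Bas
variable (H : Bas)
lemma mem_one : ((1:G2)) ∈ H.Nuc := by simp [Bas.Nuc]
lemma mem_a : (H.a) ∈ H.Nuc := by simp [Bas.Nuc]
lemma mem_ai : (H.a⁻¹) ∈ H.Nuc := by simp [Bas.Nuc]
lemma mem_b : (H.b) ∈ H.Nuc := by simp [Bas.Nuc]
lemma mem_bi : (H.b⁻¹) ∈ H.Nuc := by simp [Bas.Nuc]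
lemma mem_aB : (H.a * H.b⁻¹) ∈ H.Nuc := by simp [Bas.Nuc]
lemma mem_bA : (H.b * H.a⁻¹) ∈ H.Nuc := by simp [Bas.Nuc]
lemma nuc_step : ∀ u ∈ H.Nuc, ∀ i : Fin 2, ∃ (j : Fin 2) (v : G2), v ∈ H.Nuc ∧ ∀ x, u (consW i x) = consW j (v x) := by
  intro u hu i
  simp only [Bas.Nuc, Set.mem_insert_iff, Set.mem_singleton_iff] at hu
  have hfin : ∀ k : Fin 2, k = 0 ∨ k = 1 := by decide
  rcases hu with rfl|rfl|rfl|rfl|rfl|rfl|rfl <;> rcases hfin i with rfl|rfl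
  · -- 1 at 0
    refine ⟨0, (1 : G2), H.mem_one, fun x => ?_⟩
    rfl
  · -- 1 at 1
    refine ⟨1, (1 : G2), H.mem_one, fun x => ?_⟩
    rfl
  · -- a at 0
    refine ⟨0, (1 : G2), H.mem_one, fun x => ?_⟩
    show H.a (consW 0 x) = consW 0 ((1 : G2) x)
    rw [H.ha0]
    try rfl
  · -- a at 1
    refine ⟨1, H.b, H.mem_b, fun x => ?_⟩
    show H.a (consW 1 x) = consW 1 (H.b x)
    rw [H.ha1]
    try rfl
  · -- A at 0
    refine ⟨0, (1 : G2), H.mem_one, fun x => ?_⟩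
    show H.a⁻¹ (consW 0 x) = consW 0 ((1 : G2) x)
    rw [H.ia0]
    try rfl
  · -- A at 1
    refine ⟨1, H.b⁻¹, H.mem_bi, fun x => ?_⟩
    show H.a⁻¹ (consW 1 x) = consW 1 (H.b⁻¹ x)
    rw [H.ia1]
    try rfl
  · -- b at 0
    refine ⟨1, (1 : G2), H.mem_one, fun x => ?_⟩
    show H.b (consW 0 x) = consW 1 ((1 : G2) x)
    rw [H.hb0]
    try rfl
  · -- b at 1
    refine ⟨0, H.a, H.mem_a, fun x => ?_⟩
    show H.b (consW 1 x) = consW 0 (H.a x)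
    rw [H.hb1]
    try rfl
  · -- B at 0
    refine ⟨1, H.a⁻¹, H.mem_ai, fun x => ?_⟩
    show H.b⁻¹ (consW 0 x) = consW 1 (H.a⁻¹ x)
    rw [H.ib0]
    try rfl
  · -- B at 1
    refine ⟨0, (1 : G2), H.mem_one, fun x => ?_⟩
    show H.b⁻¹ (consW 1 x) = consW 0 ((1 : G2) x)
    rw [H.ib1]
    try rfl
  · -- aB at 0
    refine ⟨1, (H.b * H.a⁻¹), H.mem_bA, fun x => ?_⟩
    show H.a (H.b⁻¹ (consW 0 x)) = consW 1 ((H.b * H.a⁻¹) x)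
    rw [H.ib0, H.ha1]
    try rfl
  · -- aB at 1
    refine ⟨0, (1 : G2), H.mem_one, fun x => ?_⟩
    show H.a (H.b⁻¹ (consW 1 x)) = consW 0 ((1 : G2) x)
    rw [H.ib1, H.ha0]
    try rfl
  · -- bA at 0
    refine ⟨1, (1 : G2), H.mem_one, fun x => ?_⟩
    show H.b (H.a⁻¹ (consW 0 x)) = consW 1 ((1 : G2) x)
    rw [H.ia0, H.hb0]
    try rfl
  · -- bA at 1
    refine ⟨0, (H.a * H.b⁻¹), H.mem_aB, fun x => ?_⟩
    show H.b (H.a⁻¹ (consW 1 x)) = consW 0 ((H.a * H.b⁻¹) x)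
    rw [H.ia1, H.hb1]
    try rfl

lemma trS_one : H.Tr ((1 : G2)) 2 := by
  apply tr2_core
  have hfin : ∀ k : Fin 2, k = 0 ∨ k = 1 := by decide
  intro i j; rcases hfin i with rfl|rfl <;> rcases hfin j with rfl|rfl
  · refine ⟨0, 0, (1 : G2), H.mem_one, fun x => ?_⟩
    try rfl
  · refine ⟨0, 1, (1 : G2), H.mem_one, fun x => ?_⟩
    try rfl
  · refine ⟨1, 0, (1 : G2), H.mem_one, fun x => ?_⟩
    try rfl
  · refine ⟨1, 1, (1 : G2), H.mem_one, fun x => ?_⟩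
    try rfl
lemma trS_A : H.Tr (H.a⁻¹) 2 := by
  apply tr2_core
  have hfin : ∀ k : Fin 2, k = 0 ∨ k = 1 := by decide
  intro i j; rcases hfin i with rfl|rfl <;> rcases hfin j with rfl|rfl
  · refine ⟨0, 0, (1 : G2), H.mem_one, fun x => ?_⟩
    show H.a⁻¹ (consW 0 (consW 0 x)) = consW 0 (consW 0 ((1 : G2) x))
    rw [H.ia0]
    try rfl
  · refine ⟨0, 1, (1 : G2), H.mem_one, fun x => ?_⟩
    show H.a⁻¹ (consW 0 (consW 1 x)) = consW 0 (consW 1 ((1 : G2) x))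
    rw [H.ia0]
    try rfl
  · refine ⟨1, 1, H.a⁻¹, H.mem_ai, fun x => ?_⟩
    show H.a⁻¹ (consW 1 (consW 0 x)) = consW 1 (consW 1 (H.a⁻¹ x))
    rw [H.ia1, H.ib0]
    try rfl
  · refine ⟨1, 0, (1 : G2), H.mem_one, fun x => ?_⟩
    show H.a⁻¹ (consW 1 (consW 1 x)) = consW 1 (consW 0 ((1 : G2) x))
    rw [H.ia1, H.ib1]
    try rfl
lemma trS_B : H.Tr (H.b⁻¹) 2 := by
  apply tr2_core
  have hfin : ∀ k : Fin 2, k = 0 ∨ k = 1 := by decide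
  intro i j; rcases hfin i with rfl|rfl <;> rcases hfin j with rfl|rfl
  · refine ⟨1, 0, (1 : G2), H.mem_one, fun x => ?_⟩
    show H.b⁻¹ (consW 0 (consW 0 x)) = consW 1 (consW 0 ((1 : G2) x))
    rw [H.ib0, H.ia0]
    try rfl
  · refine ⟨1, 1, H.b⁻¹, H.mem_bi, fun x => ?_⟩
    show H.b⁻¹ (consW 0 (consW 1 x)) = consW 1 (consW 1 (H.b⁻¹ x))
    rw [H.ib0, H.ia1]
    try rfl
  · refine ⟨0, 0, (1 : G2), H.mem_one, fun x => ?_⟩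
    show H.b⁻¹ (consW 1 (consW 0 x)) = consW 0 (consW 0 ((1 : G2) x))
    rw [H.ib1]
    try rfl
  · refine ⟨0, 1, (1 : G2), H.mem_one, fun x => ?_⟩
    show H.b⁻¹ (consW 1 (consW 1 x)) = consW 0 (consW 1 ((1 : G2) x))
    rw [H.ib1]
    try rfl
lemma trS_a : H.Tr (H.a) 2 := by
  apply tr2_core
  have hfin : ∀ k : Fin 2, k = 0 ∨ k = 1 := by decide
  intro i j; rcases hfin i with rfl|rfl <;> rcases hfin j with rfl|rfl
  · refine ⟨0, 0, (1 : G2), H.mem_one, fun x => ?_⟩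
    show H.a (consW 0 (consW 0 x)) = consW 0 (consW 0 ((1 : G2) x))
    rw [H.ha0]
    try rfl
  · refine ⟨0, 1, (1 : G2), H.mem_one, fun x => ?_⟩
    show H.a (consW 0 (consW 1 x)) = consW 0 (consW 1 ((1 : G2) x))
    rw [H.ha0]
    try rfl
  · refine ⟨1, 1, (1 : G2), H.mem_one, fun x => ?_⟩
    show H.a (consW 1 (consW 0 x)) = consW 1 (consW 1 ((1 : G2) x))
    rw [H.ha1, H.hb0]
    try rfl
  · refine ⟨1, 0, H.a, H.mem_a, fun x => ?_⟩
    show H.a (consW 1 (consW 1 x)) = consW 1 (consW 0 (H.a x))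
    rw [H.ha1, H.hb1]
    try rfl
lemma trS_b : H.Tr (H.b) 2 := by
  apply tr2_core
  have hfin : ∀ k : Fin 2, k = 0 ∨ k = 1 := by decide
  intro i j; rcases hfin i with rfl|rfl <;> rcases hfin j with rfl|rfl
  · refine ⟨1, 0, (1 : G2), H.mem_one, fun x => ?_⟩
    show H.b (consW 0 (consW 0 x)) = consW 1 (consW 0 ((1 : G2) x))
    rw [H.hb0]
    try rfl
  · refine ⟨1, 1, (1 : G2), H.mem_one, fun x => ?_⟩
    show H.b (consW 0 (consW 1 x)) = consW 1 (consW 1 ((1 : G2) x))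
    rw [H.hb0]
    try rfl
  · refine ⟨0, 0, (1 : G2), H.mem_one, fun x => ?_⟩
    show H.b (consW 1 (consW 0 x)) = consW 0 (consW 0 ((1 : G2) x))
    rw [H.hb1, H.ha0]
    try rfl
  · refine ⟨0, 1, H.b, H.mem_b, fun x => ?_⟩
    show H.b (consW 1 (consW 1 x)) = consW 0 (consW 1 (H.b x))
    rw [H.hb1, H.ha1]
    try rfl
lemma trS_AA : H.Tr ((H.a⁻¹ * H.a⁻¹)) 2 := by
  apply tr2_core
  have hfin : ∀ k : Fin 2, k = 0 ∨ k = 1 := by decide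
  intro i j; rcases hfin i with rfl|rfl <;> rcases hfin j with rfl|rfl
  · refine ⟨0, 0, (1 : G2), H.mem_one, fun x => ?_⟩
    show H.a⁻¹ (H.a⁻¹ (consW 0 (consW 0 x))) = consW 0 (consW 0 ((1 : G2) x))
    rw [H.ia0, H.ia0]
    try rfl
  · refine ⟨0, 1, (1 : G2), H.mem_one, fun x => ?_⟩
    show H.a⁻¹ (H.a⁻¹ (consW 0 (consW 1 x))) = consW 0 (consW 1 ((1 : G2) x))
    rw [H.ia0, H.ia0]
    try rfl
  · refine ⟨1, 0, H.a⁻¹, H.mem_ai, fun x => ?_⟩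
    show H.a⁻¹ (H.a⁻¹ (consW 1 (consW 0 x))) = consW 1 (consW 0 (H.a⁻¹ x))
    rw [H.ia1, H.ia1, H.ib0, H.ib1]
    try rfl
  · refine ⟨1, 1, H.a⁻¹, H.mem_ai, fun x => ?_⟩
    show H.a⁻¹ (H.a⁻¹ (consW 1 (consW 1 x))) = consW 1 (consW 1 (H.a⁻¹ x))
    rw [H.ia1, H.ia1, H.ib1, H.ib0]
    try rfl
lemma trS_AB : H.Tr ((H.a⁻¹ * H.b⁻¹)) 2 := by
  apply tr2_core
  have hfin : ∀ k : Fin 2, k = 0 ∨ k = 1 := by decide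
  intro i j; rcases hfin i with rfl|rfl <;> rcases hfin j with rfl|rfl
  · refine ⟨1, 1, H.a⁻¹, H.mem_ai, fun x => ?_⟩
    show H.a⁻¹ (H.b⁻¹ (consW 0 (consW 0 x))) = consW 1 (consW 1 (H.a⁻¹ x))
    rw [H.ib0, H.ia1, H.ia0, H.ib0]
    try rfl
  · refine ⟨1, 0, H.b⁻¹, H.mem_bi, fun x => ?_⟩
    show H.a⁻¹ (H.b⁻¹ (consW 0 (consW 1 x))) = consW 1 (consW 0 (H.b⁻¹ x))
    rw [H.ib0, H.ia1, H.ia1, H.ib1]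
    try rfl
  · refine ⟨0, 0, (1 : G2), H.mem_one, fun x => ?_⟩
    show H.a⁻¹ (H.b⁻¹ (consW 1 (consW 0 x))) = consW 0 (consW 0 ((1 : G2) x))
    rw [H.ib1, H.ia0]
    try rfl
  · refine ⟨0, 1, (1 : G2), H.mem_one, fun x => ?_⟩
    show H.a⁻¹ (H.b⁻¹ (consW 1 (consW 1 x))) = consW 0 (consW 1 ((1 : G2) x))
    rw [H.ib1, H.ia0]
    try rfl
lemma trS_Ab : H.Tr ((H.a⁻¹ * H.b)) 2 := by
  apply tr2_core
  have hfin : ∀ k : Fin 2, k = 0 ∨ k = 1 := by decide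
  intro i j; rcases hfin i with rfl|rfl <;> rcases hfin j with rfl|rfl
  · refine ⟨1, 1, H.a⁻¹, H.mem_ai, fun x => ?_⟩
    show H.a⁻¹ (H.b (consW 0 (consW 0 x))) = consW 1 (consW 1 (H.a⁻¹ x))
    rw [H.hb0, H.ia1, H.ib0]
    try rfl
  · refine ⟨1, 0, (1 : G2), H.mem_one, fun x => ?_⟩
    show H.a⁻¹ (H.b (consW 0 (consW 1 x))) = consW 1 (consW 0 ((1 : G2) x))
    rw [H.hb0, H.ia1, H.ib1]
    try rfl
  · refine ⟨0, 0, (1 : G2), H.mem_one, fun x => ?_⟩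
    show H.a⁻¹ (H.b (consW 1 (consW 0 x))) = consW 0 (consW 0 ((1 : G2) x))
    rw [H.hb1, H.ia0, H.ha0]
    try rfl
  · refine ⟨0, 1, H.b, H.mem_b, fun x => ?_⟩
    show H.a⁻¹ (H.b (consW 1 (consW 1 x))) = consW 0 (consW 1 (H.b x))
    rw [H.hb1, H.ia0, H.ha1]
    try rfl
lemma trS_BA : H.Tr ((H.b⁻¹ * H.a⁻¹)) 2 := by
  apply tr2_core
  have hfin : ∀ k : Fin 2, k = 0 ∨ k = 1 := by decide
  intro i j; rcases hfin i with rfl|rfl <;> rcases hfin j with rfl|rfl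
  · refine ⟨1, 0, (1 : G2), H.mem_one, fun x => ?_⟩
    show H.b⁻¹ (H.a⁻¹ (consW 0 (consW 0 x))) = consW 1 (consW 0 ((1 : G2) x))
    rw [H.ia0, H.ib0, H.ia0]
    try rfl
  · refine ⟨1, 1, H.b⁻¹, H.mem_bi, fun x => ?_⟩
    show H.b⁻¹ (H.a⁻¹ (consW 0 (consW 1 x))) = consW 1 (consW 1 (H.b⁻¹ x))
    rw [H.ia0, H.ib0, H.ia1]
    try rfl
  · refine ⟨0, 1, H.a⁻¹, H.mem_ai, fun x => ?_⟩
    show H.b⁻¹ (H.a⁻¹ (consW 1 (consW 0 x))) = consW 0 (consW 1 (H.a⁻¹ x))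
    rw [H.ia1, H.ib1, H.ib0]
    try rfl
  · refine ⟨0, 0, (1 : G2), H.mem_one, fun x => ?_⟩
    show H.b⁻¹ (H.a⁻¹ (consW 1 (consW 1 x))) = consW 0 (consW 0 ((1 : G2) x))
    rw [H.ia1, H.ib1, H.ib1]
    try rfl
lemma trS_BB : H.Tr ((H.b⁻¹ * H.b⁻¹)) 2 := by
  apply tr2_core
  have hfin : ∀ k : Fin 2, k = 0 ∨ k = 1 := by decide
  intro i j; rcases hfin i with rfl|rfl <;> rcases hfin j with rfl|rfl
  · refine ⟨0, 0, (1 : G2), H.mem_one, fun x => ?_⟩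
    show H.b⁻¹ (H.b⁻¹ (consW 0 (consW 0 x))) = consW 0 (consW 0 ((1 : G2) x))
    rw [H.ib0, H.ib1, H.ia0]
    try rfl
  · refine ⟨0, 1, H.b⁻¹, H.mem_bi, fun x => ?_⟩
    show H.b⁻¹ (H.b⁻¹ (consW 0 (consW 1 x))) = consW 0 (consW 1 (H.b⁻¹ x))
    rw [H.ib0, H.ib1, H.ia1]
    try rfl
  · refine ⟨1, 0, (1 : G2), H.mem_one, fun x => ?_⟩
    show H.b⁻¹ (H.b⁻¹ (consW 1 (consW 0 x))) = consW 1 (consW 0 ((1 : G2) x))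
    rw [H.ib1, H.ib0, H.ia0]
    try rfl
  · refine ⟨1, 1, H.b⁻¹, H.mem_bi, fun x => ?_⟩
    show H.b⁻¹ (H.b⁻¹ (consW 1 (consW 1 x))) = consW 1 (consW 1 (H.b⁻¹ x))
    rw [H.ib1, H.ib0, H.ia1]
    try rfl
lemma trS_Ba : H.Tr ((H.b⁻¹ * H.a)) 2 := by
  apply tr2_core
  have hfin : ∀ k : Fin 2, k = 0 ∨ k = 1 := by decide
  intro i j; rcases hfin i with rfl|rfl <;> rcases hfin j with rfl|rfl
  · refine ⟨1, 0, (1 : G2), H.mem_one, fun x => ?_⟩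
    show H.b⁻¹ (H.a (consW 0 (consW 0 x))) = consW 1 (consW 0 ((1 : G2) x))
    rw [H.ha0, H.ib0, H.ia0]
    try rfl
  · refine ⟨1, 1, H.b⁻¹, H.mem_bi, fun x => ?_⟩
    show H.b⁻¹ (H.a (consW 0 (consW 1 x))) = consW 1 (consW 1 (H.b⁻¹ x))
    rw [H.ha0, H.ib0, H.ia1]
    try rfl
  · refine ⟨0, 1, (1 : G2), H.mem_one, fun x => ?_⟩
    show H.b⁻¹ (H.a (consW 1 (consW 0 x))) = consW 0 (consW 1 ((1 : G2) x))
    rw [H.ha1, H.ib1, H.hb0]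
    try rfl
  · refine ⟨0, 0, H.a, H.mem_a, fun x => ?_⟩
    show H.b⁻¹ (H.a (consW 1 (consW 1 x))) = consW 0 (consW 0 (H.a x))
    rw [H.ha1, H.ib1, H.hb1]
    try rfl
lemma trS_aB : H.Tr ((H.a * H.b⁻¹)) 2 := by
  apply tr2_core
  have hfin : ∀ k : Fin 2, k = 0 ∨ k = 1 := by decide
  intro i j; rcases hfin i with rfl|rfl <;> rcases hfin j with rfl|rfl
  · refine ⟨1, 1, (1 : G2), H.mem_one, fun x => ?_⟩
    show H.a (H.b⁻¹ (consW 0 (consW 0 x))) = consW 1 (consW 1 ((1 : G2) x))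
    rw [H.ib0, H.ha1, H.ia0, H.hb0]
    try rfl
  · refine ⟨1, 0, (H.a * H.b⁻¹), H.mem_aB, fun x => ?_⟩
    show H.a (H.b⁻¹ (consW 0 (consW 1 x))) = consW 1 (consW 0 ((H.a * H.b⁻¹) x))
    rw [H.ib0, H.ha1, H.ia1, H.hb1]
    try rfl
  · refine ⟨0, 0, (1 : G2), H.mem_one, fun x => ?_⟩
    show H.a (H.b⁻¹ (consW 1 (consW 0 x))) = consW 0 (consW 0 ((1 : G2) x))
    rw [H.ib1, H.ha0]
    try rfl
  · refine ⟨0, 1, (1 : G2), H.mem_one, fun x => ?_⟩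
    show H.a (H.b⁻¹ (consW 1 (consW 1 x))) = consW 0 (consW 1 ((1 : G2) x))
    rw [H.ib1, H.ha0]
    try rfl
lemma trS_aa : H.Tr ((H.a * H.a)) 2 := by
  apply tr2_core
  have hfin : ∀ k : Fin 2, k = 0 ∨ k = 1 := by decide
  intro i j; rcases hfin i with rfl|rfl <;> rcases hfin j with rfl|rfl
  · refine ⟨0, 0, (1 : G2), H.mem_one, fun x => ?_⟩
    show H.a (H.a (consW 0 (consW 0 x))) = consW 0 (consW 0 ((1 : G2) x))
    rw [H.ha0, H.ha0]
    try rfl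
  · refine ⟨0, 1, (1 : G2), H.mem_one, fun x => ?_⟩
    show H.a (H.a (consW 0 (consW 1 x))) = consW 0 (consW 1 ((1 : G2) x))
    rw [H.ha0, H.ha0]
    try rfl
  · refine ⟨1, 0, H.a, H.mem_a, fun x => ?_⟩
    show H.a (H.a (consW 1 (consW 0 x))) = consW 1 (consW 0 (H.a x))
    rw [H.ha1, H.ha1, H.hb0, H.hb1]
    try rfl
  · refine ⟨1, 1, H.a, H.mem_a, fun x => ?_⟩
    show H.a (H.a (consW 1 (consW 1 x))) = consW 1 (consW 1 (H.a x))
    rw [H.ha1, H.ha1, H.hb1, H.hb0]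
    try rfl
lemma trS_ab : H.Tr ((H.a * H.b)) 2 := by
  apply tr2_core
  have hfin : ∀ k : Fin 2, k = 0 ∨ k = 1 := by decide
  intro i j; rcases hfin i with rfl|rfl <;> rcases hfin j with rfl|rfl
  · refine ⟨1, 1, (1 : G2), H.mem_one, fun x => ?_⟩
    show H.a (H.b (consW 0 (consW 0 x))) = consW 1 (consW 1 ((1 : G2) x))
    rw [H.hb0, H.ha1, H.hb0]
    try rfl
  · refine ⟨1, 0, H.a, H.mem_a, fun x => ?_⟩
    show H.a (H.b (consW 0 (consW 1 x))) = consW 1 (consW 0 (H.a x))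
    rw [H.hb0, H.ha1, H.hb1]
    try rfl
  · refine ⟨0, 0, (1 : G2), H.mem_one, fun x => ?_⟩
    show H.a (H.b (consW 1 (consW 0 x))) = consW 0 (consW 0 ((1 : G2) x))
    rw [H.hb1, H.ha0, H.ha0]
    try rfl
  · refine ⟨0, 1, H.b, H.mem_b, fun x => ?_⟩
    show H.a (H.b (consW 1 (consW 1 x))) = consW 0 (consW 1 (H.b x))
    rw [H.hb1, H.ha0, H.ha1]
    try rfl
lemma trS_bA : H.Tr ((H.b * H.a⁻¹)) 2 := by
  apply tr2_core
  have hfin : ∀ k : Fin 2, k = 0 ∨ k = 1 := by decide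
  intro i j; rcases hfin i with rfl|rfl <;> rcases hfin j with rfl|rfl
  · refine ⟨1, 0, (1 : G2), H.mem_one, fun x => ?_⟩
    show H.b (H.a⁻¹ (consW 0 (consW 0 x))) = consW 1 (consW 0 ((1 : G2) x))
    rw [H.ia0, H.hb0]
    try rfl
  · refine ⟨1, 1, (1 : G2), H.mem_one, fun x => ?_⟩
    show H.b (H.a⁻¹ (consW 0 (consW 1 x))) = consW 1 (consW 1 ((1 : G2) x))
    rw [H.ia0, H.hb0]
    try rfl
  · refine ⟨0, 1, (H.b * H.a⁻¹), H.mem_bA, fun x => ?_⟩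
    show H.b (H.a⁻¹ (consW 1 (consW 0 x))) = consW 0 (consW 1 ((H.b * H.a⁻¹) x))
    rw [H.ia1, H.hb1, H.ib0, H.ha1]
    try rfl
  · refine ⟨0, 0, (1 : G2), H.mem_one, fun x => ?_⟩
    show H.b (H.a⁻¹ (consW 1 (consW 1 x))) = consW 0 (consW 0 ((1 : G2) x))
    rw [H.ia1, H.hb1, H.ib1, H.ha0]
    try rfl
lemma trS_ba : H.Tr ((H.b * H.a)) 2 := by
  apply tr2_core
  have hfin : ∀ k : Fin 2, k = 0 ∨ k = 1 := by decide
  intro i j; rcases hfin i with rfl|rfl <;> rcases hfin j with rfl|rfl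
  · refine ⟨1, 0, (1 : G2), H.mem_one, fun x => ?_⟩
    show H.b (H.a (consW 0 (consW 0 x))) = consW 1 (consW 0 ((1 : G2) x))
    rw [H.ha0, H.hb0]
    try rfl
  · refine ⟨1, 1, (1 : G2), H.mem_one, fun x => ?_⟩
    show H.b (H.a (consW 0 (consW 1 x))) = consW 1 (consW 1 ((1 : G2) x))
    rw [H.ha0, H.hb0]
    try rfl
  · refine ⟨0, 1, H.b, H.mem_b, fun x => ?_⟩
    show H.b (H.a (consW 1 (consW 0 x))) = consW 0 (consW 1 (H.b x))
    rw [H.ha1, H.hb1, H.hb0, H.ha1]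
    try rfl
  · refine ⟨0, 0, H.a, H.mem_a, fun x => ?_⟩
    show H.b (H.a (consW 1 (consW 1 x))) = consW 0 (consW 0 (H.a x))
    rw [H.ha1, H.hb1, H.hb1, H.ha0]
    try rfl
lemma trS_bb : H.Tr ((H.b * H.b)) 2 := by
  apply tr2_core
  have hfin : ∀ k : Fin 2, k = 0 ∨ k = 1 := by decide
  intro i j; rcases hfin i with rfl|rfl <;> rcases hfin j with rfl|rfl
  · refine ⟨0, 0, (1 : G2), H.mem_one, fun x => ?_⟩
    show H.b (H.b (consW 0 (consW 0 x))) = consW 0 (consW 0 ((1 : G2) x))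
    rw [H.hb0, H.hb1, H.ha0]
    try rfl
  · refine ⟨0, 1, H.b, H.mem_b, fun x => ?_⟩
    show H.b (H.b (consW 0 (consW 1 x))) = consW 0 (consW 1 (H.b x))
    rw [H.hb0, H.hb1, H.ha1]
    try rfl
  · refine ⟨1, 0, (1 : G2), H.mem_one, fun x => ?_⟩
    show H.b (H.b (consW 1 (consW 0 x))) = consW 1 (consW 0 ((1 : G2) x))
    rw [H.hb1, H.hb0, H.ha0]
    try rfl
  · refine ⟨1, 1, H.b, H.mem_b, fun x => ?_⟩
    show H.b (H.b (consW 1 (consW 1 x))) = consW 1 (consW 1 (H.b x))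
    rw [H.hb1, H.hb0, H.ha1]
    try rfl
lemma trS_AbA : H.Tr ((H.a⁻¹ * H.b * H.a⁻¹)) 2 := by
  apply tr2_core
  have hfin : ∀ k : Fin 2, k = 0 ∨ k = 1 := by decide
  intro i j; rcases hfin i with rfl|rfl <;> rcases hfin j with rfl|rfl
  · refine ⟨1, 1, H.a⁻¹, H.mem_ai, fun x => ?_⟩
    show H.a⁻¹ (H.b (H.a⁻¹ (consW 0 (consW 0 x)))) = consW 1 (consW 1 (H.a⁻¹ x))
    rw [H.ia0, H.hb0, H.ia1, H.ib0]
    try rfl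
  · refine ⟨1, 0, (1 : G2), H.mem_one, fun x => ?_⟩
    show H.a⁻¹ (H.b (H.a⁻¹ (consW 0 (consW 1 x)))) = consW 1 (consW 0 ((1 : G2) x))
    rw [H.ia0, H.hb0, H.ia1, H.ib1]
    try rfl
  · refine ⟨0, 1, (H.b * H.a⁻¹), H.mem_bA, fun x => ?_⟩
    show H.a⁻¹ (H.b (H.a⁻¹ (consW 1 (consW 0 x)))) = consW 0 (consW 1 ((H.b * H.a⁻¹) x))
    rw [H.ia1, H.hb1, H.ia0, H.ib0, H.ha1]
    try rfl
  · refine ⟨0, 0, (1 : G2), H.mem_one, fun x => ?_⟩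
    show H.a⁻¹ (H.b (H.a⁻¹ (consW 1 (consW 1 x)))) = consW 0 (consW 0 ((1 : G2) x))
    rw [H.ia1, H.hb1, H.ia0, H.ib1, H.ha0]
    try rfl
lemma trS_BaB : H.Tr ((H.b⁻¹ * H.a * H.b⁻¹)) 2 := by
  apply tr2_core
  have hfin : ∀ k : Fin 2, k = 0 ∨ k = 1 := by decide
  intro i j; rcases hfin i with rfl|rfl <;> rcases hfin j with rfl|rfl
  · refine ⟨0, 1, (1 : G2), H.mem_one, fun x => ?_⟩
    show H.b⁻¹ (H.a (H.b⁻¹ (consW 0 (consW 0 x)))) = consW 0 (consW 1 ((1 : G2) x))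
    rw [H.ib0, H.ha1, H.ib1, H.ia0, H.hb0]
    try rfl
  · refine ⟨0, 0, (H.a * H.b⁻¹), H.mem_aB, fun x => ?_⟩
    show H.b⁻¹ (H.a (H.b⁻¹ (consW 0 (consW 1 x)))) = consW 0 (consW 0 ((H.a * H.b⁻¹) x))
    rw [H.ib0, H.ha1, H.ib1, H.ia1, H.hb1]
    try rfl
  · refine ⟨1, 0, (1 : G2), H.mem_one, fun x => ?_⟩
    show H.b⁻¹ (H.a (H.b⁻¹ (consW 1 (consW 0 x)))) = consW 1 (consW 0 ((1 : G2) x))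
    rw [H.ib1, H.ha0, H.ib0, H.ia0]
    try rfl
  · refine ⟨1, 1, H.b⁻¹, H.mem_bi, fun x => ?_⟩
    show H.b⁻¹ (H.a (H.b⁻¹ (consW 1 (consW 1 x)))) = consW 1 (consW 1 (H.b⁻¹ x))
    rw [H.ib1, H.ha0, H.ib0, H.ia1]
    try rfl
lemma trS_aBA : H.Tr ((H.a * H.b⁻¹ * H.a⁻¹)) 2 := by
  apply tr2_core
  have hfin : ∀ k : Fin 2, k = 0 ∨ k = 1 := by decide
  intro i j; rcases hfin i with rfl|rfl <;> rcases hfin j with rfl|rfl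
  · refine ⟨1, 1, (1 : G2), H.mem_one, fun x => ?_⟩
    show H.a (H.b⁻¹ (H.a⁻¹ (consW 0 (consW 0 x)))) = consW 1 (consW 1 ((1 : G2) x))
    rw [H.ia0, H.ib0, H.ha1, H.ia0, H.hb0]
    try rfl
  · refine ⟨1, 0, (H.a * H.b⁻¹), H.mem_aB, fun x => ?_⟩
    show H.a (H.b⁻¹ (H.a⁻¹ (consW 0 (consW 1 x)))) = consW 1 (consW 0 ((H.a * H.b⁻¹) x))
    rw [H.ia0, H.ib0, H.ha1, H.ia1, H.hb1]
    try rfl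
  · refine ⟨0, 1, H.a⁻¹, H.mem_ai, fun x => ?_⟩
    show H.a (H.b⁻¹ (H.a⁻¹ (consW 1 (consW 0 x)))) = consW 0 (consW 1 (H.a⁻¹ x))
    rw [H.ia1, H.ib1, H.ha0, H.ib0]
    try rfl
  · refine ⟨0, 0, (1 : G2), H.mem_one, fun x => ?_⟩
    show H.a (H.b⁻¹ (H.a⁻¹ (consW 1 (consW 1 x)))) = consW 0 (consW 0 ((1 : G2) x))
    rw [H.ia1, H.ib1, H.ha0, H.ib1]
    try rfl
lemma trS_aBB : H.Tr ((H.a * H.b⁻¹ * H.b⁻¹)) 2 := by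
  apply tr2_core
  have hfin : ∀ k : Fin 2, k = 0 ∨ k = 1 := by decide
  intro i j; rcases hfin i with rfl|rfl <;> rcases hfin j with rfl|rfl
  · refine ⟨0, 0, (1 : G2), H.mem_one, fun x => ?_⟩
    show H.a (H.b⁻¹ (H.b⁻¹ (consW 0 (consW 0 x)))) = consW 0 (consW 0 ((1 : G2) x))
    rw [H.ib0, H.ib1, H.ha0, H.ia0]
    try rfl
  · refine ⟨0, 1, H.b⁻¹, H.mem_bi, fun x => ?_⟩
    show H.a (H.b⁻¹ (H.b⁻¹ (consW 0 (consW 1 x)))) = consW 0 (consW 1 (H.b⁻¹ x))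
    rw [H.ib0, H.ib1, H.ha0, H.ia1]
    try rfl
  · refine ⟨1, 1, (1 : G2), H.mem_one, fun x => ?_⟩
    show H.a (H.b⁻¹ (H.b⁻¹ (consW 1 (consW 0 x)))) = consW 1 (consW 1 ((1 : G2) x))
    rw [H.ib1, H.ib0, H.ha1, H.ia0, H.hb0]
    try rfl
  · refine ⟨1, 0, (H.a * H.b⁻¹), H.mem_aB, fun x => ?_⟩
    show H.a (H.b⁻¹ (H.b⁻¹ (consW 1 (consW 1 x)))) = consW 1 (consW 0 ((H.a * H.b⁻¹) x))
    rw [H.ib1, H.ib0, H.ha1, H.ia1, H.hb1]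
    try rfl
lemma trS_aBa : H.Tr ((H.a * H.b⁻¹ * H.a)) 2 := by
  apply tr2_core
  have hfin : ∀ k : Fin 2, k = 0 ∨ k = 1 := by decide
  intro i j; rcases hfin i with rfl|rfl <;> rcases hfin j with rfl|rfl
  · refine ⟨1, 1, (1 : G2), H.mem_one, fun x => ?_⟩
    show H.a (H.b⁻¹ (H.a (consW 0 (consW 0 x)))) = consW 1 (consW 1 ((1 : G2) x))
    rw [H.ha0, H.ib0, H.ha1, H.ia0, H.hb0]
    try rfl
  · refine ⟨1, 0, (H.a * H.b⁻¹), H.mem_aB, fun x => ?_⟩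
    show H.a (H.b⁻¹ (H.a (consW 0 (consW 1 x)))) = consW 1 (consW 0 ((H.a * H.b⁻¹) x))
    rw [H.ha0, H.ib0, H.ha1, H.ia1, H.hb1]
    try rfl
  · refine ⟨0, 1, (1 : G2), H.mem_one, fun x => ?_⟩
    show H.a (H.b⁻¹ (H.a (consW 1 (consW 0 x)))) = consW 0 (consW 1 ((1 : G2) x))
    rw [H.ha1, H.ib1, H.ha0, H.hb0]
    try rfl
  · refine ⟨0, 0, H.a, H.mem_a, fun x => ?_⟩
    show H.a (H.b⁻¹ (H.a (consW 1 (consW 1 x)))) = consW 0 (consW 0 (H.a x))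
    rw [H.ha1, H.ib1, H.ha0, H.hb1]
    try rfl
lemma trS_aaB : H.Tr ((H.a * H.a * H.b⁻¹)) 2 := by
  apply tr2_core
  have hfin : ∀ k : Fin 2, k = 0 ∨ k = 1 := by decide
  intro i j; rcases hfin i with rfl|rfl <;> rcases hfin j with rfl|rfl
  · refine ⟨1, 0, H.a, H.mem_a, fun x => ?_⟩
    show H.a (H.a (H.b⁻¹ (consW 0 (consW 0 x)))) = consW 1 (consW 0 (H.a x))
    rw [H.ib0, H.ha1, H.ha1, H.ia0, H.hb0, H.hb1]
    try rfl
  · refine ⟨1, 1, (H.a * H.b⁻¹), H.mem_aB, fun x => ?_⟩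
    show H.a (H.a (H.b⁻¹ (consW 0 (consW 1 x)))) = consW 1 (consW 1 ((H.a * H.b⁻¹) x))
    rw [H.ib0, H.ha1, H.ha1, H.ia1, H.hb1, H.hb0]
    try rfl
  · refine ⟨0, 0, (1 : G2), H.mem_one, fun x => ?_⟩
    show H.a (H.a (H.b⁻¹ (consW 1 (consW 0 x)))) = consW 0 (consW 0 ((1 : G2) x))
    rw [H.ib1, H.ha0, H.ha0]
    try rfl
  · refine ⟨0, 1, (1 : G2), H.mem_one, fun x => ?_⟩
    show H.a (H.a (H.b⁻¹ (consW 1 (consW 1 x)))) = consW 0 (consW 1 ((1 : G2) x))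
    rw [H.ib1, H.ha0, H.ha0]
    try rfl
lemma trS_abA : H.Tr ((H.a * H.b * H.a⁻¹)) 2 := by
  apply tr2_core
  have hfin : ∀ k : Fin 2, k = 0 ∨ k = 1 := by decide
  intro i j; rcases hfin i with rfl|rfl <;> rcases hfin j with rfl|rfl
  · refine ⟨1, 1, (1 : G2), H.mem_one, fun x => ?_⟩
    show H.a (H.b (H.a⁻¹ (consW 0 (consW 0 x)))) = consW 1 (consW 1 ((1 : G2) x))
    rw [H.ia0, H.hb0, H.ha1, H.hb0]
    try rfl
  · refine ⟨1, 0, H.a, H.mem_a, fun x => ?_⟩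
    show H.a (H.b (H.a⁻¹ (consW 0 (consW 1 x)))) = consW 1 (consW 0 (H.a x))
    rw [H.ia0, H.hb0, H.ha1, H.hb1]
    try rfl
  · refine ⟨0, 1, (H.b * H.a⁻¹), H.mem_bA, fun x => ?_⟩
    show H.a (H.b (H.a⁻¹ (consW 1 (consW 0 x)))) = consW 0 (consW 1 ((H.b * H.a⁻¹) x))
    rw [H.ia1, H.hb1, H.ha0, H.ib0, H.ha1]
    try rfl
  · refine ⟨0, 0, (1 : G2), H.mem_one, fun x => ?_⟩
    show H.a (H.b (H.a⁻¹ (consW 1 (consW 1 x)))) = consW 0 (consW 0 ((1 : G2) x))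
    rw [H.ia1, H.hb1, H.ha0, H.ib1, H.ha0]
    try rfl
lemma trS_bAA : H.Tr ((H.b * H.a⁻¹ * H.a⁻¹)) 2 := by
  apply tr2_core
  have hfin : ∀ k : Fin 2, k = 0 ∨ k = 1 := by decide
  intro i j; rcases hfin i with rfl|rfl <;> rcases hfin j with rfl|rfl
  · refine ⟨1, 0, (1 : G2), H.mem_one, fun x => ?_⟩
    show H.b (H.a⁻¹ (H.a⁻¹ (consW 0 (consW 0 x)))) = consW 1 (consW 0 ((1 : G2) x))
    rw [H.ia0, H.ia0, H.hb0]
    try rfl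
  · refine ⟨1, 1, (1 : G2), H.mem_one, fun x => ?_⟩
    show H.b (H.a⁻¹ (H.a⁻¹ (consW 0 (consW 1 x)))) = consW 1 (consW 1 ((1 : G2) x))
    rw [H.ia0, H.ia0, H.hb0]
    try rfl
  · refine ⟨0, 0, H.a⁻¹, H.mem_ai, fun x => ?_⟩
    show H.b (H.a⁻¹ (H.a⁻¹ (consW 1 (consW 0 x)))) = consW 0 (consW 0 (H.a⁻¹ x))
    rw [H.ia1, H.ia1, H.hb1, H.ib0, H.ib1, H.ha0]
    try rfl
  · refine ⟨0, 1, (H.b * H.a⁻¹), H.mem_bA, fun x => ?_⟩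
    show H.b (H.a⁻¹ (H.a⁻¹ (consW 1 (consW 1 x)))) = consW 0 (consW 1 ((H.b * H.a⁻¹) x))
    rw [H.ia1, H.ia1, H.hb1, H.ib1, H.ib0, H.ha1]
    try rfl
lemma trS_bAB : H.Tr ((H.b * H.a⁻¹ * H.b⁻¹)) 2 := by
  apply tr2_core
  have hfin : ∀ k : Fin 2, k = 0 ∨ k = 1 := by decide
  intro i j; rcases hfin i with rfl|rfl <;> rcases hfin j with rfl|rfl
  · refine ⟨0, 1, (H.b * H.a⁻¹), H.mem_bA, fun x => ?_⟩
    show H.b (H.a⁻¹ (H.b⁻¹ (consW 0 (consW 0 x)))) = consW 0 (consW 1 ((H.b * H.a⁻¹) x))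
    rw [H.ib0, H.ia1, H.hb1, H.ia0, H.ib0, H.ha1]
    try rfl
  · refine ⟨0, 0, H.b⁻¹, H.mem_bi, fun x => ?_⟩
    show H.b (H.a⁻¹ (H.b⁻¹ (consW 0 (consW 1 x)))) = consW 0 (consW 0 (H.b⁻¹ x))
    rw [H.ib0, H.ia1, H.hb1, H.ia1, H.ib1, H.ha0]
    try rfl
  · refine ⟨1, 0, (1 : G2), H.mem_one, fun x => ?_⟩
    show H.b (H.a⁻¹ (H.b⁻¹ (consW 1 (consW 0 x)))) = consW 1 (consW 0 ((1 : G2) x))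
    rw [H.ib1, H.ia0, H.hb0]
    try rfl
  · refine ⟨1, 1, (1 : G2), H.mem_one, fun x => ?_⟩
    show H.b (H.a⁻¹ (H.b⁻¹ (consW 1 (consW 1 x)))) = consW 1 (consW 1 ((1 : G2) x))
    rw [H.ib1, H.ia0, H.hb0]
    try rfl
lemma trS_bAb : H.Tr ((H.b * H.a⁻¹ * H.b)) 2 := by
  apply tr2_core
  have hfin : ∀ k : Fin 2, k = 0 ∨ k = 1 := by decide
  intro i j; rcases hfin i with rfl|rfl <;> rcases hfin j with rfl|rfl
  · refine ⟨0, 1, (H.b * H.a⁻¹), H.mem_bA, fun x => ?_⟩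
    show H.b (H.a⁻¹ (H.b (consW 0 (consW 0 x)))) = consW 0 (consW 1 ((H.b * H.a⁻¹) x))
    rw [H.hb0, H.ia1, H.hb1, H.ib0, H.ha1]
    try rfl
  · refine ⟨0, 0, (1 : G2), H.mem_one, fun x => ?_⟩
    show H.b (H.a⁻¹ (H.b (consW 0 (consW 1 x)))) = consW 0 (consW 0 ((1 : G2) x))
    rw [H.hb0, H.ia1, H.hb1, H.ib1, H.ha0]
    try rfl
  · refine ⟨1, 0, (1 : G2), H.mem_one, fun x => ?_⟩
    show H.b (H.a⁻¹ (H.b (consW 1 (consW 0 x)))) = consW 1 (consW 0 ((1 : G2) x))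
    rw [H.hb1, H.ia0, H.hb0, H.ha0]
    try rfl
  · refine ⟨1, 1, H.b, H.mem_b, fun x => ?_⟩
    show H.b (H.a⁻¹ (H.b (consW 1 (consW 1 x)))) = consW 1 (consW 1 (H.b x))
    rw [H.hb1, H.ia0, H.hb0, H.ha1]
    try rfl
lemma trS_baB : H.Tr ((H.b * H.a * H.b⁻¹)) 2 := by
  apply tr2_core
  have hfin : ∀ k : Fin 2, k = 0 ∨ k = 1 := by decide
  intro i j; rcases hfin i with rfl|rfl <;> rcases hfin j with rfl|rfl
  · refine ⟨0, 1, H.b, H.mem_b, fun x => ?_⟩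
    show H.b (H.a (H.b⁻¹ (consW 0 (consW 0 x)))) = consW 0 (consW 1 (H.b x))
    rw [H.ib0, H.ha1, H.hb1, H.ia0, H.hb0, H.ha1]
    try rfl
  · refine ⟨0, 0, (H.a * H.b⁻¹), H.mem_aB, fun x => ?_⟩
    show H.b (H.a (H.b⁻¹ (consW 0 (consW 1 x)))) = consW 0 (consW 0 ((H.a * H.b⁻¹) x))
    rw [H.ib0, H.ha1, H.hb1, H.ia1, H.hb1, H.ha0]
    try rfl
  · refine ⟨1, 0, (1 : G2), H.mem_one, fun x => ?_⟩
    show H.b (H.a (H.b⁻¹ (consW 1 (consW 0 x)))) = consW 1 (consW 0 ((1 : G2) x))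
    rw [H.ib1, H.ha0, H.hb0]
    try rfl
  · refine ⟨1, 1, (1 : G2), H.mem_one, fun x => ?_⟩
    show H.b (H.a (H.b⁻¹ (consW 1 (consW 1 x)))) = consW 1 (consW 1 ((1 : G2) x))
    rw [H.ib1, H.ha0, H.hb0]
    try rfl
lemma trS_bbA : H.Tr ((H.b * H.b * H.a⁻¹)) 2 := by
  apply tr2_core
  have hfin : ∀ k : Fin 2, k = 0 ∨ k = 1 := by decide
  intro i j; rcases hfin i with rfl|rfl <;> rcases hfin j with rfl|rfl
  · refine ⟨0, 0, (1 : G2), H.mem_one, fun x => ?_⟩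
    show H.b (H.b (H.a⁻¹ (consW 0 (consW 0 x)))) = consW 0 (consW 0 ((1 : G2) x))
    rw [H.ia0, H.hb0, H.hb1, H.ha0]
    try rfl
  · refine ⟨0, 1, H.b, H.mem_b, fun x => ?_⟩
    show H.b (H.b (H.a⁻¹ (consW 0 (consW 1 x)))) = consW 0 (consW 1 (H.b x))
    rw [H.ia0, H.hb0, H.hb1, H.ha1]
    try rfl
  · refine ⟨1, 1, (H.b * H.a⁻¹), H.mem_bA, fun x => ?_⟩
    show H.b (H.b (H.a⁻¹ (consW 1 (consW 0 x)))) = consW 1 (consW 1 ((H.b * H.a⁻¹) x))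
    rw [H.ia1, H.hb1, H.hb0, H.ib0, H.ha1]
    try rfl
  · refine ⟨1, 0, (1 : G2), H.mem_one, fun x => ?_⟩
    show H.b (H.b (H.a⁻¹ (consW 1 (consW 1 x)))) = consW 1 (consW 0 ((1 : G2) x))
    rw [H.ia1, H.hb1, H.hb0, H.ib1, H.ha0]
    try rfl
lemma trS_aBaB : H.Tr ((H.a * H.b⁻¹ * H.a * H.b⁻¹)) 2 := by
  apply tr2_core
  have hfin : ∀ k : Fin 2, k = 0 ∨ k = 1 := by decide
  intro i j; rcases hfin i with rfl|rfl <;> rcases hfin j with rfl|rfl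
  · refine ⟨0, 1, (1 : G2), H.mem_one, fun x => ?_⟩
    show H.a (H.b⁻¹ (H.a (H.b⁻¹ (consW 0 (consW 0 x))))) = consW 0 (consW 1 ((1 : G2) x))
    rw [H.ib0, H.ha1, H.ib1, H.ha0, H.ia0, H.hb0]
    try rfl
  · refine ⟨0, 0, (H.a * H.b⁻¹), H.mem_aB, fun x => ?_⟩
    show H.a (H.b⁻¹ (H.a (H.b⁻¹ (consW 0 (consW 1 x))))) = consW 0 (consW 0 ((H.a * H.b⁻¹) x))
    rw [H.ib0, H.ha1, H.ib1, H.ha0, H.ia1, H.hb1]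
    try rfl
  · refine ⟨1, 1, (1 : G2), H.mem_one, fun x => ?_⟩
    show H.a (H.b⁻¹ (H.a (H.b⁻¹ (consW 1 (consW 0 x))))) = consW 1 (consW 1 ((1 : G2) x))
    rw [H.ib1, H.ha0, H.ib0, H.ha1, H.ia0, H.hb0]
    try rfl
  · refine ⟨1, 0, (H.a * H.b⁻¹), H.mem_aB, fun x => ?_⟩
    show H.a (H.b⁻¹ (H.a (H.b⁻¹ (consW 1 (consW 1 x))))) = consW 1 (consW 0 ((H.a * H.b⁻¹) x))
    rw [H.ib1, H.ha0, H.ib0, H.ha1, H.ia1, H.hb1]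
    try rfl
lemma trS_bAbA : H.Tr ((H.b * H.a⁻¹ * H.b * H.a⁻¹)) 2 := by
  apply tr2_core
  have hfin : ∀ k : Fin 2, k = 0 ∨ k = 1 := by decide
  intro i j; rcases hfin i with rfl|rfl <;> rcases hfin j with rfl|rfl
  · refine ⟨0, 1, (H.b * H.a⁻¹), H.mem_bA, fun x => ?_⟩
    show H.b (H.a⁻¹ (H.b (H.a⁻¹ (consW 0 (consW 0 x))))) = consW 0 (consW 1 ((H.b * H.a⁻¹) x))
    rw [H.ia0, H.hb0, H.ia1, H.hb1, H.ib0, H.ha1]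
    try rfl
  · refine ⟨0, 0, (1 : G2), H.mem_one, fun x => ?_⟩
    show H.b (H.a⁻¹ (H.b (H.a⁻¹ (consW 0 (consW 1 x))))) = consW 0 (consW 0 ((1 : G2) x))
    rw [H.ia0, H.hb0, H.ia1, H.hb1, H.ib1, H.ha0]
    try rfl
  · refine ⟨1, 1, (H.b * H.a⁻¹), H.mem_bA, fun x => ?_⟩
    show H.b (H.a⁻¹ (H.b (H.a⁻¹ (consW 1 (consW 0 x))))) = consW 1 (consW 1 ((H.b * H.a⁻¹) x))
    rw [H.ia1, H.hb1, H.ia0, H.hb0, H.ib0, H.ha1]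
    try rfl
  · refine ⟨1, 0, (1 : G2), H.mem_one, fun x => ?_⟩
    show H.b (H.a⁻¹ (H.b (H.a⁻¹ (consW 1 (consW 1 x))))) = consW 1 (consW 0 ((1 : G2) x))
    rw [H.ia1, H.hb1, H.ia0, H.hb0, H.ib1, H.ha0]
    try rfl
lemma trS_baBA : H.Tr ((H.b * H.a * H.b⁻¹ * H.a⁻¹)) 2 := by
  apply tr2_core
  have hfin : ∀ k : Fin 2, k = 0 ∨ k = 1 := by decide
  intro i j; rcases hfin i with rfl|rfl <;> rcases hfin j with rfl|rfl
  · refine ⟨0, 1, H.b, H.mem_b, fun x => ?_⟩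
    show H.b (H.a (H.b⁻¹ (H.a⁻¹ (consW 0 (consW 0 x))))) = consW 0 (consW 1 (H.b x))
    rw [H.ia0, H.ib0, H.ha1, H.hb1, H.ia0, H.hb0, H.ha1]
    try rfl
  · refine ⟨0, 0, (H.a * H.b⁻¹), H.mem_aB, fun x => ?_⟩
    show H.b (H.a (H.b⁻¹ (H.a⁻¹ (consW 0 (consW 1 x))))) = consW 0 (consW 0 ((H.a * H.b⁻¹) x))
    rw [H.ia0, H.ib0, H.ha1, H.hb1, H.ia1, H.hb1, H.ha0]
    try rfl
  · refine ⟨1, 1, H.a⁻¹, H.mem_ai, fun x => ?_⟩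
    show H.b (H.a (H.b⁻¹ (H.a⁻¹ (consW 1 (consW 0 x))))) = consW 1 (consW 1 (H.a⁻¹ x))
    rw [H.ia1, H.ib1, H.ha0, H.hb0, H.ib0]
    try rfl
  · refine ⟨1, 0, (1 : G2), H.mem_one, fun x => ?_⟩
    show H.b (H.a (H.b⁻¹ (H.a⁻¹ (consW 1 (consW 1 x))))) = consW 1 (consW 0 ((1 : G2) x))
    rw [H.ia1, H.ib1, H.ha0, H.hb0, H.ib1]
    try rfl

lemma pair_tr : ∀ u ∈ H.Nuc, ∀ v ∈ H.Nuc, H.Tr (u * v) 2 := by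
  intro u hu v hv
  simp only [Bas.Nuc, Set.mem_insert_iff, Set.mem_singleton_iff] at hu hv
  rcases hu with rfl|rfl|rfl|rfl|rfl|rfl|rfl <;> rcases hv with rfl|rfl|rfl|rfl|rfl|rfl|rfl
  · -- 1 * 1 = 1
    rw [show ((1:G2)) * ((1:G2)) = (1 : G2) by group]
    exact H.trS_one
  · -- 1 * a = a
    rw [show ((1:G2)) * (H.a) = H.a by group]
    exact H.trS_a
  · -- 1 * A = A
    rw [show ((1:G2)) * (H.a⁻¹) = H.a⁻¹ by group]
    exact H.trS_A
  · -- 1 * b = b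
    rw [show ((1:G2)) * (H.b) = H.b by group]
    exact H.trS_b
  · -- 1 * B = B
    rw [show ((1:G2)) * (H.b⁻¹) = H.b⁻¹ by group]
    exact H.trS_B
  · -- 1 * aB = aB
    rw [show ((1:G2)) * (H.a * H.b⁻¹) = (H.a * H.b⁻¹) by group]
    exact H.trS_aB
  · -- 1 * bA = bA
    rw [show ((1:G2)) * (H.b * H.a⁻¹) = (H.b * H.a⁻¹) by group]
    exact H.trS_bA
  · -- a * 1 = a
    rw [show (H.a) * ((1:G2)) = H.a by group]
    exact H.trS_a
  · -- a * a = aa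
    rw [show (H.a) * (H.a) = (H.a * H.a) by group]
    exact H.trS_aa
  · -- a * A = 1
    rw [show (H.a) * (H.a⁻¹) = (1 : G2) by group]
    exact H.trS_one
  · -- a * b = ab
    rw [show (H.a) * (H.b) = (H.a * H.b) by group]
    exact H.trS_ab
  · -- a * B = aB
    rw [show (H.a) * (H.b⁻¹) = (H.a * H.b⁻¹) by group]
    exact H.trS_aB
  · -- a * aB = aaB
    rw [show (H.a) * (H.a * H.b⁻¹) = (H.a * H.a * H.b⁻¹) by group]
    exact H.trS_aaB
  · -- a * bA = abA
    rw [show (H.a) * (H.b * H.a⁻¹) = (H.a * H.b * H.a⁻¹) by group]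
    exact H.trS_abA
  · -- A * 1 = A
    rw [show (H.a⁻¹) * ((1:G2)) = H.a⁻¹ by group]
    exact H.trS_A
  · -- A * a = 1
    rw [show (H.a⁻¹) * (H.a) = (1 : G2) by group]
    exact H.trS_one
  · -- A * A = AA
    rw [show (H.a⁻¹) * (H.a⁻¹) = (H.a⁻¹ * H.a⁻¹) by group]
    exact H.trS_AA
  · -- A * b = Ab
    rw [show (H.a⁻¹) * (H.b) = (H.a⁻¹ * H.b) by group]
    exact H.trS_Ab
  · -- A * B = AB
    rw [show (H.a⁻¹) * (H.b⁻¹) = (H.a⁻¹ * H.b⁻¹) by group]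
    exact H.trS_AB
  · -- A * aB = B
    rw [show (H.a⁻¹) * (H.a * H.b⁻¹) = H.b⁻¹ by group]
    exact H.trS_B
  · -- A * bA = AbA
    rw [show (H.a⁻¹) * (H.b * H.a⁻¹) = (H.a⁻¹ * H.b * H.a⁻¹) by group]
    exact H.trS_AbA
  · -- b * 1 = b
    rw [show (H.b) * ((1:G2)) = H.b by group]
    exact H.trS_b
  · -- b * a = ba
    rw [show (H.b) * (H.a) = (H.b * H.a) by group]
    exact H.trS_ba
  · -- b * A = bA
    rw [show (H.b) * (H.a⁻¹) = (H.b * H.a⁻¹) by group]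
    exact H.trS_bA
  · -- b * b = bb
    rw [show (H.b) * (H.b) = (H.b * H.b) by group]
    exact H.trS_bb
  · -- b * B = 1
    rw [show (H.b) * (H.b⁻¹) = (1 : G2) by group]
    exact H.trS_one
  · -- b * aB = baB
    rw [show (H.b) * (H.a * H.b⁻¹) = (H.b * H.a * H.b⁻¹) by group]
    exact H.trS_baB
  · -- b * bA = bbA
    rw [show (H.b) * (H.b * H.a⁻¹) = (H.b * H.b * H.a⁻¹) by group]
    exact H.trS_bbA
  · -- B * 1 = B
    rw [show (H.b⁻¹) * ((1:G2)) = H.b⁻¹ by group]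
    exact H.trS_B
  · -- B * a = Ba
    rw [show (H.b⁻¹) * (H.a) = (H.b⁻¹ * H.a) by group]
    exact H.trS_Ba
  · -- B * A = BA
    rw [show (H.b⁻¹) * (H.a⁻¹) = (H.b⁻¹ * H.a⁻¹) by group]
    exact H.trS_BA
  · -- B * b = 1
    rw [show (H.b⁻¹) * (H.b) = (1 : G2) by group]
    exact H.trS_one
  · -- B * B = BB
    rw [show (H.b⁻¹) * (H.b⁻¹) = (H.b⁻¹ * H.b⁻¹) by group]
    exact H.trS_BB
  · -- B * aB = BaB
    rw [show (H.b⁻¹) * (H.a * H.b⁻¹) = (H.b⁻¹ * H.a * H.b⁻¹) by group]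
    exact H.trS_BaB
  · -- B * bA = A
    rw [show (H.b⁻¹) * (H.b * H.a⁻¹) = H.a⁻¹ by group]
    exact H.trS_A
  · -- aB * 1 = aB
    rw [show (H.a * H.b⁻¹) * ((1:G2)) = (H.a * H.b⁻¹) by group]
    exact H.trS_aB
  · -- aB * a = aBa
    rw [show (H.a * H.b⁻¹) * (H.a) = (H.a * H.b⁻¹ * H.a) by group]
    exact H.trS_aBa
  · -- aB * A = aBA
    rw [show (H.a * H.b⁻¹) * (H.a⁻¹) = (H.a * H.b⁻¹ * H.a⁻¹) by group]
    exact H.trS_aBA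
  · -- aB * b = a
    rw [show (H.a * H.b⁻¹) * (H.b) = H.a by group]
    exact H.trS_a
  · -- aB * B = aBB
    rw [show (H.a * H.b⁻¹) * (H.b⁻¹) = (H.a * H.b⁻¹ * H.b⁻¹) by group]
    exact H.trS_aBB
  · -- aB * aB = aBaB
    rw [show (H.a * H.b⁻¹) * (H.a * H.b⁻¹) = (H.a * H.b⁻¹ * H.a * H.b⁻¹) by group]
    exact H.trS_aBaB
  · -- aB * bA = 1
    rw [show (H.a * H.b⁻¹) * (H.b * H.a⁻¹) = (1 : G2) by group]
    exact H.trS_one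
  · -- bA * 1 = bA
    rw [show (H.b * H.a⁻¹) * ((1:G2)) = (H.b * H.a⁻¹) by group]
    exact H.trS_bA
  · -- bA * a = b
    rw [show (H.b * H.a⁻¹) * (H.a) = H.b by group]
    exact H.trS_b
  · -- bA * A = bAA
    rw [show (H.b * H.a⁻¹) * (H.a⁻¹) = (H.b * H.a⁻¹ * H.a⁻¹) by group]
    exact H.trS_bAA
  · -- bA * b = bAb
    rw [show (H.b * H.a⁻¹) * (H.b) = (H.b * H.a⁻¹ * H.b) by group]
    exact H.trS_bAb
  · -- bA * B = bAB
    rw [show (H.b * H.a⁻¹) * (H.b⁻¹) = (H.b * H.a⁻¹ * H.b⁻¹) by group]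
    exact H.trS_bAB
  · -- bA * aB = 1
    rw [show (H.b * H.a⁻¹) * (H.a * H.b⁻¹) = (1 : G2) by group]
    exact H.trS_one
  · -- bA * bA = bAbA
    rw [show (H.b * H.a⁻¹) * (H.b * H.a⁻¹) = (H.b * H.a⁻¹ * H.b * H.a⁻¹) by group]
    exact H.trS_bAbA

lemma nuc_pf_mv : ∀ u ∈ H.Nuc, ∀ i j : Fin 2, Bas.PF u [i, j] ∨ Bas.Mv u [i, j] := by
  intro u hu i j
  have hfin : ∀ k : Fin 2, k = 0 ∨ k = 1 := by decide
  simp only [Bas.Nuc, Set.mem_insert_iff, Set.mem_singleton_iff] at hu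
  rcases hu with rfl|rfl|rfl|rfl|rfl|rfl|rfl <;> rcases hfin i with rfl|rfl <;> rcases hfin j with rfl|rfl
  · exact Or.inl (fun x => rfl)
  · exact Or.inl (fun x => rfl)
  · exact Or.inl (fun x => rfl)
  · exact Or.inl (fun x => rfl)
  · left
    intro x
    show H.a (consW 0 (consW 0 (extW [] x))) = _
    rw [H.ha0]
    try rfl
  · left
    intro x
    show H.a (consW 0 (consW 1 (extW [] x))) = _
    rw [H.ha0]
    try rfl
  · right
    intro x y h
    rw [show extW [(1:Fin 2), 0] x = consW 1 (consW 0 x) from rfl] at h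
    rw [show (H.a) (consW 1 (consW 0 x)) = consW 1 (consW 1 ((1 : G2) x)) from by show H.a (consW 1 (consW 0 x)) = _; rw [H.ha1, H.hb0]; try rfl] at h
    exact consW_ne_of_ne (by decide) _ _ (consW_inj h).2
  · right
    intro x y h
    rw [show extW [(1:Fin 2), 1] x = consW 1 (consW 1 x) from rfl] at h
    rw [show (H.a) (consW 1 (consW 1 x)) = consW 1 (consW 0 (H.a x)) from by show H.a (consW 1 (consW 1 x)) = _; rw [H.ha1, H.hb1]; try rfl] at h
    exact consW_ne_of_ne (by decide) _ _ (consW_inj h).2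
  · left
    intro x
    show H.a⁻¹ (consW 0 (consW 0 (extW [] x))) = _
    rw [H.ia0]
    try rfl
  · left
    intro x
    show H.a⁻¹ (consW 0 (consW 1 (extW [] x))) = _
    rw [H.ia0]
    try rfl
  · right
    intro x y h
    rw [show extW [(1:Fin 2), 0] x = consW 1 (consW 0 x) from rfl] at h
    rw [show (H.a⁻¹) (consW 1 (consW 0 x)) = consW 1 (consW 1 (H.a⁻¹ x)) from by show H.a⁻¹ (consW 1 (consW 0 x)) = _; rw [H.ia1, H.ib0]; try rfl] at h
    exact consW_ne_of_ne (by decide) _ _ (consW_inj h).2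
  · right
    intro x y h
    rw [show extW [(1:Fin 2), 1] x = consW 1 (consW 1 x) from rfl] at h
    rw [show (H.a⁻¹) (consW 1 (consW 1 x)) = consW 1 (consW 0 ((1 : G2) x)) from by show H.a⁻¹ (consW 1 (consW 1 x)) = _; rw [H.ia1, H.ib1]; try rfl] at h
    exact consW_ne_of_ne (by decide) _ _ (consW_inj h).2
  · right
    intro x y h
    rw [show extW [(0:Fin 2), 0] x = consW 0 (consW 0 x) from rfl] at h
    rw [show (H.b) (consW 0 (consW 0 x)) = consW 1 (consW 0 ((1 : G2) x)) from by show H.b (consW 0 (consW 0 x)) = _; rw [H.hb0]; try rfl] at h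
    exact consW_ne_of_ne (by decide) _ _ h
  · right
    intro x y h
    rw [show extW [(0:Fin 2), 1] x = consW 0 (consW 1 x) from rfl] at h
    rw [show (H.b) (consW 0 (consW 1 x)) = consW 1 (consW 1 ((1 : G2) x)) from by show H.b (consW 0 (consW 1 x)) = _; rw [H.hb0]; try rfl] at h
    exact consW_ne_of_ne (by decide) _ _ h
  · right
    intro x y h
    rw [show extW [(1:Fin 2), 0] x = consW 1 (consW 0 x) from rfl] at h
    rw [show (H.b) (consW 1 (consW 0 x)) = consW 0 (consW 0 ((1 : G2) x)) from by show H.b (consW 1 (consW 0 x)) = _; rw [H.hb1, H.ha0]; try rfl] at h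
    exact consW_ne_of_ne (by decide) _ _ h
  · right
    intro x y h
    rw [show extW [(1:Fin 2), 1] x = consW 1 (consW 1 x) from rfl] at h
    rw [show (H.b) (consW 1 (consW 1 x)) = consW 0 (consW 1 (H.b x)) from by show H.b (consW 1 (consW 1 x)) = _; rw [H.hb1, H.ha1]; try rfl] at h
    exact consW_ne_of_ne (by decide) _ _ h
  · right
    intro x y h
    rw [show extW [(0:Fin 2), 0] x = consW 0 (consW 0 x) from rfl] at h
    rw [show (H.b⁻¹) (consW 0 (consW 0 x)) = consW 1 (consW 0 ((1 : G2) x)) from by show H.b⁻¹ (consW 0 (consW 0 x)) = _; rw [H.ib0, H.ia0]; try rfl] at h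
    exact consW_ne_of_ne (by decide) _ _ h
  · right
    intro x y h
    rw [show extW [(0:Fin 2), 1] x = consW 0 (consW 1 x) from rfl] at h
    rw [show (H.b⁻¹) (consW 0 (consW 1 x)) = consW 1 (consW 1 (H.b⁻¹ x)) from by show H.b⁻¹ (consW 0 (consW 1 x)) = _; rw [H.ib0, H.ia1]; try rfl] at h
    exact consW_ne_of_ne (by decide) _ _ h
  · right
    intro x y h
    rw [show extW [(1:Fin 2), 0] x = consW 1 (consW 0 x) from rfl] at h
    rw [show (H.b⁻¹) (consW 1 (consW 0 x)) = consW 0 (consW 0 ((1 : G2) x)) from by show H.b⁻¹ (consW 1 (consW 0 x)) = _; rw [H.ib1]; try rfl] at h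
    exact consW_ne_of_ne (by decide) _ _ h
  · right
    intro x y h
    rw [show extW [(1:Fin 2), 1] x = consW 1 (consW 1 x) from rfl] at h
    rw [show (H.b⁻¹) (consW 1 (consW 1 x)) = consW 0 (consW 1 ((1 : G2) x)) from by show H.b⁻¹ (consW 1 (consW 1 x)) = _; rw [H.ib1]; try rfl] at h
    exact consW_ne_of_ne (by decide) _ _ h
  · right
    intro x y h
    rw [show extW [(0:Fin 2), 0] x = consW 0 (consW 0 x) from rfl] at h
    rw [show ((H.a * H.b⁻¹)) (consW 0 (consW 0 x)) = consW 1 (consW 1 ((1 : G2) x)) from by show H.a (H.b⁻¹ (consW 0 (consW 0 x))) = _; rw [H.ib0, H.ha1, H.ia0, H.hb0]; try rfl] at h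
    exact consW_ne_of_ne (by decide) _ _ h
  · right
    intro x y h
    rw [show extW [(0:Fin 2), 1] x = consW 0 (consW 1 x) from rfl] at h
    rw [show ((H.a * H.b⁻¹)) (consW 0 (consW 1 x)) = consW 1 (consW 0 ((H.a * H.b⁻¹) x)) from by show H.a (H.b⁻¹ (consW 0 (consW 1 x))) = _; rw [H.ib0, H.ha1, H.ia1, H.hb1]; try rfl] at h
    exact consW_ne_of_ne (by decide) _ _ h
  · right
    intro x y h
    rw [show extW [(1:Fin 2), 0] x = consW 1 (consW 0 x) from rfl] at h
    rw [show ((H.a * H.b⁻¹)) (consW 1 (consW 0 x)) = consW 0 (consW 0 ((1 : G2) x)) from by show H.a (H.b⁻¹ (consW 1 (consW 0 x))) = _; rw [H.ib1, H.ha0]; try rfl] at h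
    exact consW_ne_of_ne (by decide) _ _ h
  · right
    intro x y h
    rw [show extW [(1:Fin 2), 1] x = consW 1 (consW 1 x) from rfl] at h
    rw [show ((H.a * H.b⁻¹)) (consW 1 (consW 1 x)) = consW 0 (consW 1 ((1 : G2) x)) from by show H.a (H.b⁻¹ (consW 1 (consW 1 x))) = _; rw [H.ib1, H.ha0]; try rfl] at h
    exact consW_ne_of_ne (by decide) _ _ h
  · right
    intro x y h
    rw [show extW [(0:Fin 2), 0] x = consW 0 (consW 0 x) from rfl] at h
    rw [show ((H.b * H.a⁻¹)) (consW 0 (consW 0 x)) = consW 1 (consW 0 ((1 : G2) x)) from by show H.b (H.a⁻¹ (consW 0 (consW 0 x))) = _; rw [H.ia0, H.hb0]; try rfl] at h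
    exact consW_ne_of_ne (by decide) _ _ h
  · right
    intro x y h
    rw [show extW [(0:Fin 2), 1] x = consW 0 (consW 1 x) from rfl] at h
    rw [show ((H.b * H.a⁻¹)) (consW 0 (consW 1 x)) = consW 1 (consW 1 ((1 : G2) x)) from by show H.b (H.a⁻¹ (consW 0 (consW 1 x))) = _; rw [H.ia0, H.hb0]; try rfl] at h
    exact consW_ne_of_ne (by decide) _ _ h
  · right
    intro x y h
    rw [show extW [(1:Fin 2), 0] x = consW 1 (consW 0 x) from rfl] at h
    rw [show ((H.b * H.a⁻¹)) (consW 1 (consW 0 x)) = consW 0 (consW 1 ((H.b * H.a⁻¹) x)) from by show H.b (H.a⁻¹ (consW 1 (consW 0 x))) = _; rw [H.ia1, H.hb1, H.ib0, H.ha1]; try rfl] at h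
    exact consW_ne_of_ne (by decide) _ _ h
  · right
    intro x y h
    rw [show extW [(1:Fin 2), 1] x = consW 1 (consW 1 x) from rfl] at h
    rw [show ((H.b * H.a⁻¹)) (consW 1 (consW 1 x)) = consW 0 (consW 0 ((1 : G2) x)) from by show H.b (H.a⁻¹ (consW 1 (consW 1 x))) = _; rw [H.ia1, H.hb1, H.ib1, H.ha0]; try rfl] at h
    exact consW_ne_of_ne (by decide) _ _ h
end Bas

namespace Bas

variable (H : Bas)

lemma nuc_tr : ∀ n, ∀ u ∈ H.Nuc, H.Tr u n := by
  intro n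
  induction n with
  | zero =>
    intro u hu w hw
    have : w = [] := List.eq_nil_of_length_eq_zero hw
    subst this
    exact ⟨[], u, rfl, hu, fun x => rfl⟩
  | succ n ih =>
    intro u hu w hw
    rcases w with _ | ⟨i, w⟩
    · simp at hw
    · obtain ⟨j, v, hv, hx⟩ := H.nuc_step u hu i
      obtain ⟨w', u', hl, hu', hx'⟩ := ih v hv w (by simpa using hw)
      refine ⟨j :: w', u', by simp [hl], hu', fun x => ?_⟩
      rw [extW_cons, hx, hx', extW_cons]

lemma tr_up {g : G2} {n : ℕ} (h : H.Tr g n) {m : ℕ} (hm : n ≤ m) : H.Tr g m := by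
  intro w hw
  obtain ⟨w1', u, hl1, hu, hx⟩ := h (w.take n) (by simp [hw, min_eq_left hm])
  obtain ⟨w2', u', hl2, hu', hx'⟩ := H.nuc_tr (m - n) u hu (w.drop n) (by simp [hw])
  refine ⟨w1' ++ w2', u', by simp only [List.length_append, hl1, hl2]; omega, hu', fun x => ?_⟩
  conv_lhs => rw [← List.take_append_drop n w]
  rw [extW_append, hx, hx', ← extW_append]

lemma tr_mul {g h : G2} {n : ℕ} (hg : H.Tr g n) (hh : H.Tr h n) : H.Tr (g * h) (n + 2) := by
  intro w hw
  obtain ⟨w1', u1, hl1, hu1, hx1⟩ := hh (w.take n) (by simp [hw, min_eq_left (Nat.le_add_right n 2)])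
  obtain ⟨w1'', u2, hl1', hu2, hx2⟩ := hg w1' hl1
  obtain ⟨w2', u3, hl2, hu3, hx3⟩ := H.pair_tr u2 hu2 u1 hu1 (w.drop n) (by simp [hw])
  refine ⟨w1'' ++ w2', u3, by simp only [List.length_append, hl1', hl2], hu3, fun x => ?_⟩
  conv_lhs => rw [← List.take_append_drop n w]
  rw [mul_app, extW_append, hx1, hx2, ← mul_app, hx3, ← extW_append]

abbrev Vec (n : ℕ) : Type := List.Vector (Fin 2) n

/-- transport as a bijection on level-`n` words -/
lemma tr_bij {g : G2} {n : ℕ} (h : H.Tr g n) :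
    ∃ σ : Vec n → Vec n, Function.Bijective σ ∧
      ∀ w : Vec n, ∃ u : G2, u ∈ H.Nuc ∧
        ∀ x, g (extW w.toList x) = extW (σ w).toList (u x) := by
  have hch : ∀ w : Vec n, ∃ (w' : Vec n) (u : G2), u ∈ H.Nuc ∧
      ∀ x, g (extW w.toList x) = extW w'.toList (u x) := by
    intro w
    obtain ⟨w', u, hl, hu, hx⟩ := h w.toList w.toList_length
    exact ⟨⟨w', hl⟩, u, hu, hx⟩
  choose σ u hu hx using hch
  have hinj : Function.Injective σ := by
    intro w1 w2 he
    by_contra hne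
    set x0 : XX 2 := fun _ => 0 with hx0
    have h1 := hx w1 x0
    have h2 := hx w2 ((u w2)⁻¹ ((u w1) x0))
    rw [apply_inv_apply, ← he, ← h1] at h2
    have := g.injective h2.symm
    have hnel : w1.toList ≠ w2.toList := fun hc => hne (List.Vector.eq _ _ hc)
    exact extW_ne (by simp) hnel _ _ this
  exact ⟨σ, ⟨hinj, Finite.surjective_of_injective hinj⟩, fun w => ⟨u w, hu w, hx w⟩⟩

lemma nuc_inv {u : G2} (hu : u ∈ H.Nuc) : u⁻¹ ∈ H.Nuc := by
  simp only [Bas.Nuc, Set.mem_insert_iff, Set.mem_singleton_iff] at hu ⊢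
  rcases hu with rfl|rfl|rfl|rfl|rfl|rfl|rfl
  · left; group
  · right; right; left; rfl
  · right; left; group
  · right; right; right; right; left; rfl
  · right; right; right; left; group
  · right; right; right; right; right; right; rw [mul_inv_rev, inv_inv]
  · right; right; right; right; right; left; rw [mul_inv_rev, inv_inv]

lemma tr_inv {g : G2} {n : ℕ} (h : H.Tr g n) : H.Tr g⁻¹ n := by
  obtain ⟨σ, ⟨hinj, hsurj⟩, hdata⟩ := H.tr_bij h
  intro w' hw'
  obtain ⟨v, hv⟩ := hsurj ⟨w', hw'⟩
  obtain ⟨u, hu, hx⟩ := hdata v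
  refine ⟨v.toList, u⁻¹, v.toList_length, H.nuc_inv hu, fun y => ?_⟩
  have h2 : g (extW v.toList (u⁻¹ y)) = extW w' y := by
    have := hx (u⁻¹ y)
    rw [apply_inv_apply, hv] at this
    exact this
  rw [← h2, inv_apply_apply]

lemma ct_mul {g h : G2} (hg : H.CT g) (hh : H.CT h) : H.CT (g * h) := by
  obtain ⟨n, hgn⟩ := hg
  obtain ⟨m, hhm⟩ := hh
  exact ⟨max n m + 2, H.tr_mul (H.tr_up hgn (le_max_left n m)) (H.tr_up hhm (le_max_right n m))⟩

lemma ct_inv {g : G2} (hg : H.CT g) : H.CT g⁻¹ := by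
  obtain ⟨n, hgn⟩ := hg
  exact ⟨n, H.tr_inv hgn⟩

lemma ct_of_nuc {u : G2} (hu : u ∈ H.Nuc) : H.CT u := ⟨0, H.nuc_tr 0 u hu⟩

lemma ct_closure : ∀ g ∈ Subgroup.closure {H.a, H.b}, H.CT g := by
  intro g hg
  induction hg using Subgroup.closure_induction with
  | mem x hx =>
    rcases hx with rfl | rfl
    · exact H.ct_of_nuc H.mem_a
    · exact H.ct_of_nuc H.mem_b
  | one => exact H.ct_of_nuc H.mem_one
  | mul x y _ _ hx hy => exact H.ct_mul hx hy
  | inv x _ hx => exact H.ct_inv hx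

/-- Main structure theorem: every transported element is eventually pointwise-fixed or
moving on each cylinder. -/
lemma struct_of_tr {g : G2} {n : ℕ} (h : H.Tr g n) :
    ∀ w : List (Fin 2), w.length = n + 2 → Bas.PF g w ∨ Bas.Mv g w := by
  intro w hw
  obtain ⟨w1', u, hl1, hu, hx⟩ := h (w.take n) (by simp [hw, min_eq_left (Nat.le_add_right n 2)])
  have hd : (w.drop n).length = 2 := by simp [hw]
  have hsplit : w = w.take n ++ w.drop n := (List.take_append_drop n w).symm
  rcases hdr : w.drop n with _ | ⟨i, _ | ⟨j, _ | ⟨k, t⟩⟩⟩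
  · rw [hdr] at hd; simp at hd
  · rw [hdr] at hd; simp at hd
  case cons.cons.cons => rw [hdr] at hd; simp at hd
  -- drop = [i, j]
  rw [hdr] at hsplit
  by_cases hww : w1' = w.take n
  · subst hww
    rcases H.nuc_pf_mv u hu i j with hpf | hmv
    · left
      intro x
      rw [hsplit, extW_append, hx, hpf]
    · right
      intro x y hcon
      rw [hsplit, extW_append, extW_append, hx] at hcon
      exact hmv x y (extW_inj hcon)
  · right
    intro x y hcon
    rw [hsplit, extW_append, extW_append, hx] at hcon
    exact extW_ne (by rw [hl1]; simp [hw, min_eq_left (Nat.le_add_right n 2)]) hww _ _ hcon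

end Bas

def pre (x : XX 2) : ℕ → List (Fin 2)
  | 0 => []
  | n+1 => x 0 :: pre (fun k => x (k+1)) n

@[simp] lemma pre_length (x : XX 2) (n : ℕ) : (pre x n).length = n := by
  induction n generalizing x with
  | zero => rfl
  | succ n ih => simp [pre, ih]

lemma recover (n : ℕ) (x : XX 2) : extW (pre x n) (fun k => x (n + k)) = x := by
  induction n generalizing x with
  | zero => funext k; simp [pre]
  | succ n ih =>
    show consW (x 0) (extW (pre (fun k => x (k+1)) n) (fun k => x (n + 1 + k))) = x
    calc consW (x 0) (extW (pre (fun k => x (k+1)) n) (fun k => x (n + 1 + k)))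
        = consW (x 0) (fun k => x (k+1)) := by
          have harg : (fun k => x (n + 1 + k)) = (fun k => (fun j => x (j+1)) (n + k)) := by
            funext k
            show x (n + 1 + k) = x (n + k + 1)
            congr 1
            omega
          rw [harg, ih (fun k => x (k+1))]
      _ = x := consW_eta x

namespace Bas

noncomputable def FSet (g : G2) (m : ℕ) : Finset (Bas.Vec m) :=
  @Finset.filter _ (fun w => Bas.PF g (List.Vector.toList w)) (Classical.decPred _) Finset.univ

lemma fix_eq_union {g : G2} {m : ℕ}
    (hd : ∀ w : List (Fin 2), w.length = m → Bas.PF g w ∨ Bas.Mv g w) :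
    {x : XX 2 | g x = x} = ⋃ w ∈ Bas.FSet g m, Cyl (List.Vector.toList w) := by
  ext x
  simp only [Set.mem_setOf_eq, Set.mem_iUnion]
  constructor
  · intro hgx
    have hx : extW (pre x m) (fun k => x (m+k)) = x := recover m x
    refine ⟨⟨pre x m, pre_length x m⟩, ?_, ?_⟩
    · refine (@Finset.mem_filter _ _ (Classical.decPred _) _ _).2 ⟨Finset.mem_univ _, ?_⟩
      rcases hd (pre x m) (pre_length x m) with hpf | hmv
      · exact hpf
      · exact absurd (by rw [hx, hgx]) (hmv (fun k => x (m+k)) (fun k => x (m+k)))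
    · rw [mem_Cyl_iff]; exact ⟨_, hx.symm⟩
  · rintro ⟨w, hwF, hwC⟩
    obtain ⟨y, rfl⟩ := mem_Cyl_iff.1 hwC
    simp only [Bas.FSet, Finset.mem_filter] at hwF
    exact hwF.2 y

lemma fix_measure (μ : Measure (XX 2))
    (hμ : ∀ w : List (Fin 2), μ (Cyl w) = (1 / (2:ENNReal)) ^ w.length)
    {g : G2} {m : ℕ}
    (hd : ∀ w : List (Fin 2), w.length = m → Bas.PF g w ∨ Bas.Mv g w) :
    μ {x : XX 2 | g x = x} = (Bas.FSet g m).card * (1 / (2:ENNReal)) ^ m := by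
  rw [fix_eq_union hd]
  rw [measure_biUnion_finset ?hdisj ?hmeas]
  · have hc : ∀ w ∈ Bas.FSet g m, μ (Cyl (List.Vector.toList w)) = (1 / (2:ENNReal)) ^ m :=
      fun w _ => by rw [hμ]; simp
    rw [Finset.sum_congr rfl hc, Finset.sum_const, nsmul_eq_mul]
  case hdisj =>
    intro w _ w' _ hne
    exact Cyl_disjoint (by simp) (fun hc => hne (List.Vector.eq _ _ hc))
  case hmeas =>
    exact fun w _ => measurable_Cyl _

lemma FSet_card_le (g : G2) (m : ℕ) : (Bas.FSet g m).card ≤ 2 ^ m := by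
  calc (Bas.FSet g m).card ≤ Finset.univ.card := Finset.card_le_card (Finset.subset_univ _)
    _ = 2 ^ m := by rw [Finset.card_univ]; simp [card_vector]

end Bas

namespace Bas

variable (H : Bas)

def IsPair (z v u : G2) : Prop :=
  (∀ x, z (consW 0 x) = consW 0 (v x)) ∧ (∀ x, z (consW 1 x) = consW 1 (u x))

lemma IsPair.mul {z v u z' v' u' : G2} (h : IsPair z v u) (h' : IsPair z' v' u') :
    IsPair (z * z') (v * v') (u * u') := by
  constructor <;> intro x
  · rw [mul_app, h'.1, h.1]; rfl
  · rw [mul_app, h'.2, h.2]; rfl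

lemma IsPair.inv {z v u : G2} (h : IsPair z v u) : IsPair z⁻¹ v⁻¹ u⁻¹ := by
  constructor <;> intro x
  · apply z.injective
    rw [apply_inv_apply, h.1, apply_inv_apply]
  · apply z.injective
    rw [apply_inv_apply, h.2, apply_inv_apply]

lemma IsPair.one : IsPair 1 1 1 := ⟨fun _ => rfl, fun _ => rfl⟩

lemma pair_a : Bas.IsPair H.a 1 H.b := ⟨fun x => H.ha0 x, fun x => H.ha1 x⟩

lemma pair_b2 : Bas.IsPair (H.b * H.b) H.a H.a :=
  ⟨fun x => by rw [mul_app, H.hb0, H.hb1],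
   fun x => by rw [mul_app, H.hb1, H.hb0]⟩

lemma pair_bab : Bas.IsPair (H.b⁻¹ * H.a * H.b) H.b 1 := by
  constructor <;> intro x
  · show H.b⁻¹ (H.a (H.b (consW 0 x))) = _
    rw [H.hb0, H.ha1, H.ib1]
  · show H.b⁻¹ (H.a (H.b (consW 1 x))) = _
    rw [H.hb1, H.ha0, H.ib0, inv_apply_apply]
    rfl

/-- the Basilica group -/
def BB : Subgroup G2 := Subgroup.closure {H.a, H.b}

lemma a_mem_BB : H.a ∈ H.BB := Subgroup.subset_closure (by left; rfl)
lemma b_mem_BB : H.b ∈ H.BB := Subgroup.subset_closure (by right; rfl)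

lemma exists_pair : ∀ u ∈ H.BB, ∃ z ∈ H.BB, ∃ v, Bas.IsPair z v u := by
  intro u hu
  induction hu using Subgroup.closure_induction with
  | mem y hy =>
    rcases hy with rfl | rfl
    · exact ⟨H.b * H.b, mul_mem H.b_mem_BB H.b_mem_BB, H.a, H.pair_b2⟩
    · exact ⟨H.a, H.a_mem_BB, 1, H.pair_a⟩
  | one => exact ⟨1, one_mem _, 1, Bas.IsPair.one⟩
  | mul x y _ _ ihx ihy =>
    obtain ⟨z1, hz1, v1, hp1⟩ := ihx
    obtain ⟨z2, hz2, v2, hp2⟩ := ihy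
    exact ⟨z1 * z2, mul_mem hz1 hz2, v1 * v2, hp1.mul hp2⟩
  | inv x _ ihx =>
    obtain ⟨z1, hz1, v1, hp1⟩ := ihx
    exact ⟨z1⁻¹, inv_mem hz1, v1⁻¹, hp1.inv⟩

def cc : G2 := H.b * H.a * H.b⁻¹ * H.a⁻¹

lemma cc_mem_BB : H.cc ∈ H.BB :=
  mul_mem (mul_mem (mul_mem H.b_mem_BB H.a_mem_BB) (inv_mem H.b_mem_BB)) (inv_mem H.a_mem_BB)

/-- the normal closure of `[b, a]` in `ℬ` -/
def MM : Subgroup G2 := Subgroup.closure {x | ∃ u ∈ H.BB, x = u * H.cc * u⁻¹}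

lemma MM_le_BB : H.MM ≤ H.BB := by
  rw [MM, Subgroup.closure_le]
  rintro x ⟨u, hu, rfl⟩
  exact SetLike.mem_coe.2 (mul_mem (mul_mem hu H.cc_mem_BB) (inv_mem hu))

lemma conj_MM {g u : G2} (hg : g ∈ H.MM) (hu : u ∈ H.BB) : u * g * u⁻¹ ∈ H.MM := by
  induction hg using Subgroup.closure_induction with
  | mem y hy =>
    obtain ⟨v, hv, rfl⟩ := hy
    exact Subgroup.subset_closure ⟨u * v, mul_mem hu hv, by group⟩
  | one =>
    have : u * 1 * u⁻¹ = (1 : G2) := by group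
    rw [this]; exact one_mem _
  | mul x y _ _ ihx ihy =>
    have : u * (x * y) * u⁻¹ = (u * x * u⁻¹) * (u * y * u⁻¹) := by group
    rw [this]; exact mul_mem ihx ihy
  | inv x _ ihx =>
    have : u * x⁻¹ * u⁻¹ = (u * x * u⁻¹)⁻¹ := by group
    rw [this]; exact inv_mem ihx

lemma cc_mem_MM : H.cc ∈ H.MM := Subgroup.subset_closure ⟨1, one_mem _, by group⟩

lemma pair_z0 : Bas.IsPair (H.a * H.b * H.b * H.a⁻¹ * H.b⁻¹ * H.b⁻¹) 1 H.cc := by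
  constructor <;> intro x
  · show H.a (H.b (H.b (H.a⁻¹ (H.b⁻¹ (H.b⁻¹ (consW 0 x)))))) = _
    rw [H.ib0, H.ib1, H.ia0, H.hb0, H.hb1, H.ha0, apply_inv_apply]
    rfl
  · show H.a (H.b (H.b (H.a⁻¹ (H.b⁻¹ (H.b⁻¹ (consW 1 x)))))) = _
    rw [H.ib1, H.ib0, H.ia1, H.hb1, H.hb0, H.ha1]
    rfl

lemma z0_mem_MM : (H.a * H.b * H.b * H.a⁻¹ * H.b⁻¹ * H.b⁻¹) ∈ H.MM := by
  have h1 : H.cc⁻¹ ∈ H.MM := inv_mem H.cc_mem_MM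
  have h2 : H.b * H.cc⁻¹ * H.b⁻¹ ∈ H.MM := H.conj_MM h1 H.b_mem_BB
  have h3 : H.a * H.b * H.b * H.a⁻¹ * H.b⁻¹ * H.b⁻¹ = H.cc⁻¹ * (H.b * H.cc⁻¹ * H.b⁻¹) := by
    rw [cc]; group
  rw [h3]; exact mul_mem h1 h2

lemma pair_right_MM : ∀ x ∈ H.MM, ∃ z ∈ H.MM, Bas.IsPair z 1 x := by
  intro x hx
  induction hx using Subgroup.closure_induction with
  | mem y hy =>
    obtain ⟨u, hu, rfl⟩ := hy
    obtain ⟨z, hz, v, hp⟩ := H.exists_pair u hu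
    refine ⟨z * (H.a * H.b * H.b * H.a⁻¹ * H.b⁻¹ * H.b⁻¹) * z⁻¹, ?_, ?_⟩
    · exact H.conj_MM H.z0_mem_MM hz
    · have hq := (hp.mul H.pair_z0).mul hp.inv
      rw [show v * 1 * v⁻¹ = (1 : G2) by group] at hq
      exact hq
  | one => exact ⟨1, one_mem _, Bas.IsPair.one⟩
  | mul x y _ _ ihx ihy =>
    obtain ⟨z1, hz1, hp1⟩ := ihx
    obtain ⟨z2, hz2, hp2⟩ := ihy
    refine ⟨z1 * z2, mul_mem hz1 hz2, ?_⟩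
    have hq := hp1.mul hp2
    rw [show (1 : G2) * 1 = 1 by group] at hq
    exact hq
  | inv x _ ihx =>
    obtain ⟨z1, hz1, hp1⟩ := ihx
    refine ⟨z1⁻¹, inv_mem hz1, ?_⟩
    have hq := hp1.inv
    rw [inv_one] at hq
    exact hq

end Bas

lemma Cyl_cons (i : Fin 2) (w : List (Fin 2)) : Cyl (i :: w) = consW i '' Cyl w := by
  rw [Cyl_eq_image, Cyl_eq_image]
  ext x
  constructor
  · rintro ⟨y, -, rfl⟩
    exact ⟨extW w y, ⟨y, trivial, rfl⟩, rfl⟩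
  · rintro ⟨z, ⟨y, -, rfl⟩, rfl⟩
    exact ⟨y, trivial, rfl⟩

lemma hfin2 : ∀ k : Fin 2, k = 0 ∨ k = 1 := by decide

namespace Bas

variable (H : Bas)

lemma dich_of_ct {g : G2} (h : H.CT g) :
    ∃ m, ∀ w : List (Fin 2), w.length = m → Bas.PF g w ∨ Bas.Mv g w := by
  obtain ⟨n, hn⟩ := h
  exact ⟨n + 2, H.struct_of_tr hn⟩

lemma dich_up {g : G2} {m : ℕ}
    (hd : ∀ w : List (Fin 2), w.length = m → Bas.PF g w ∨ Bas.Mv g w)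
    {L : ℕ} (hL : m ≤ L) :
    ∀ w : List (Fin 2), w.length = L → Bas.PF g w ∨ Bas.Mv g w := by
  intro w hw
  have hsplit : w = w.take m ++ w.drop m := (List.take_append_drop m w).symm
  rcases hd (w.take m) (by simp [hw, min_eq_left hL]) with hpf | hmv
  · left
    intro x
    rw [hsplit, extW_append, hpf]
  · right
    intro x y hcon
    rw [hsplit, extW_append, extW_append] at hcon
    exact hmv (extW (w.drop m) x) (extW (w.drop m) y) hcon

/-- decomposition of the fixed point set of a paired element -/
lemma fix_pair {z g0 g1 : G2} (hp : Bas.IsPair z g0 g1) :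
    {x : XX 2 | z x = x} =
      (consW 0 '' {y : XX 2 | g0 y = y}) ∪ (consW 1 '' {y : XX 2 | g1 y = y}) := by
  ext x
  simp only [Set.mem_setOf_eq, Set.mem_union, Set.mem_image]
  constructor
  · intro hzx
    rcases hfin2 (x 0) with h0 | h0
    · left
      refine ⟨fun n => x (n+1), ?_, by rw [← h0]; exact consW_eta x⟩
      have h1 := hp.1 (fun n => x (n+1))
      rw [← h0, consW_eta] at h1
      -- h1 : z x = consW (x 0) (g0 (tail))
      have h2 : consW (x 0) (fun n => x (n+1)) = consW (x 0) (g0 (fun n => x (n+1))) := by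
        rw [consW_eta, ← h1, hzx]
      exact ((consW_inj h2).2).symm
    · right
      refine ⟨fun n => x (n+1), ?_, by rw [← h0]; exact consW_eta x⟩
      have h1 := hp.2 (fun n => x (n+1))
      rw [← h0, consW_eta] at h1
      have h2 : consW (x 0) (fun n => x (n+1)) = consW (x 0) (g1 (fun n => x (n+1))) := by
        rw [consW_eta, ← h1, hzx]
      exact ((consW_inj h2).2).symm
  · rintro (⟨y, hy, rfl⟩ | ⟨y, hy, rfl⟩)
    · rw [hp.1, hy]
    · rw [hp.2, hy]

end Bas

namespace Bas

variable (H : Bas)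

lemma cons_image_eq {g : G2} {m : ℕ}
    (hd : ∀ w : List (Fin 2), w.length = m → Bas.PF g w ∨ Bas.Mv g w) (i : Fin 2) :
    consW i '' {x : XX 2 | g x = x} = ⋃ w ∈ Bas.FSet g m, Cyl (i :: List.Vector.toList w) := by
  rw [Bas.fix_eq_union hd, Set.image_iUnion₂]
  exact Set.iUnion₂_congr fun w _ => (Cyl_cons i _).symm

lemma measure_cons_image (μ : Measure (XX 2))
    (hμ : ∀ w : List (Fin 2), μ (Cyl w) = (1 / (2:ENNReal)) ^ w.length)
    {g : G2} {m : ℕ}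
    (hd : ∀ w : List (Fin 2), w.length = m → Bas.PF g w ∨ Bas.Mv g w) (i : Fin 2) :
    μ (consW i '' {x : XX 2 | g x = x}) = (1 / (2:ENNReal)) * μ {x : XX 2 | g x = x} := by
  rw [Bas.cons_image_eq hd i]
  rw [measure_biUnion_finset ?disj ?meas]
  · have hc : ∀ w ∈ Bas.FSet g m, μ (Cyl (i :: List.Vector.toList w)) =
        (1 / (2:ENNReal)) ^ (m + 1) := by
      intro w _
      rw [hμ]
      simp
    rw [Finset.sum_congr rfl hc, Finset.sum_const, nsmul_eq_mul,
      Bas.fix_measure μ hμ hd]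
    ring
  case disj =>
    intro w _ w' _ hne
    refine Cyl_disjoint (by simp) ?_
    intro hc
    exact hne (List.Vector.eq _ _ (by injection hc))
  case meas =>
    exact fun w _ => measurable_Cyl _

lemma meas_cons_image {g : G2} {m : ℕ}
    (hd : ∀ w : List (Fin 2), w.length = m → Bas.PF g w ∨ Bas.Mv g w) (i : Fin 2) :
    MeasurableSet (consW i '' {x : XX 2 | g x = x}) := by
  rw [Bas.cons_image_eq hd i]
  exact (Bas.FSet g m).measurableSet_biUnion fun w _ => measurable_Cyl _

lemma val_conj (μ : Measure (XX 2))
    (hμ : ∀ w : List (Fin 2), μ (Cyl w) = (1 / (2:ENNReal)) ^ w.length)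
    {g h : G2} (hg : H.CT g) (hh : H.CT h) :
    μ {x : XX 2 | (h * g * h⁻¹) x = x} = μ {x : XX 2 | g x = x} := by
  obtain ⟨mg, hdg⟩ := H.dich_of_ct hg
  obtain ⟨nh, hth⟩ := hh
  have hdgL := Bas.dich_up hdg (le_max_left mg nh)
  have hthL := H.tr_up hth (le_max_right mg nh)
  obtain ⟨σ, ⟨hinj, -⟩, hdata⟩ := H.tr_bij hthL
  have hset : {x : XX 2 | (h * g * h⁻¹) x = x} = h '' {x : XX 2 | g x = x} := by
    ext x
    simp only [Set.mem_setOf_eq, Set.mem_image]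
    constructor
    · intro hx
      refine ⟨h⁻¹ x, ?_, apply_inv_apply h x⟩
      have hx' : h (g (h⁻¹ x)) = x := hx
      calc g (h⁻¹ x) = h⁻¹ (h (g (h⁻¹ x))) := (inv_apply_apply h _).symm
        _ = h⁻¹ x := by rw [hx']
    · rintro ⟨y, hy, rfl⟩
      show h (g (h⁻¹ (h y))) = h y
      rw [inv_apply_apply, hy]
  have himg : ∀ w : Bas.Vec (max mg nh), h '' Cyl (List.Vector.toList w) =
      Cyl (List.Vector.toList (σ w)) := by
    intro w
    obtain ⟨u, _, hx⟩ := hdata w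
    ext x
    constructor
    · rintro ⟨z, hz, rfl⟩
      obtain ⟨y, rfl⟩ := mem_Cyl_iff.1 hz
      rw [hx]
      exact mem_Cyl_iff.2 ⟨u y, rfl⟩
    · intro hxC
      obtain ⟨y, rfl⟩ := mem_Cyl_iff.1 hxC
      refine ⟨extW (List.Vector.toList w) (u⁻¹ y), mem_Cyl_iff.2 ⟨_, rfl⟩, ?_⟩
      rw [hx, apply_inv_apply]
  rw [hset, Bas.fix_eq_union hdgL, Set.image_iUnion₂]
  rw [Set.iUnion₂_congr fun w (_ : w ∈ Bas.FSet g (max mg nh)) => himg w]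
  rw [measure_biUnion_finset ?disj ?meas]
  · have hc : ∀ w ∈ Bas.FSet g (max mg nh), μ (Cyl (List.Vector.toList (σ w))) =
        (1 / (2:ENNReal)) ^ (max mg nh) := by
      intro w _
      rw [hμ]
      simp
    rw [Finset.sum_congr rfl hc, Finset.sum_const, nsmul_eq_mul]
    have hfm := Bas.fix_measure (g := g) μ hμ hdgL
    rw [Bas.fix_eq_union hdgL] at hfm
    rw [hfm]
  case disj =>
    intro w _ w' _ hne
    refine Cyl_disjoint (by simp) ?_
    intro hc
    exact hne (hinj (List.Vector.eq _ _ hc))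
  case meas =>
    exact fun w _ => measurable_Cyl _

lemma pair_measure (μ : Measure (XX 2))
    (hμ : ∀ w : List (Fin 2), μ (Cyl w) = (1 / (2:ENNReal)) ^ w.length)
    {z g0 g1 : G2} (hp : Bas.IsPair z g0 g1) (h0 : H.CT g0) (h1 : H.CT g1) :
    μ {x : XX 2 | z x = x} =
      (1 / (2:ENNReal)) * μ {x : XX 2 | g0 x = x} +
      (1 / (2:ENNReal)) * μ {x : XX 2 | g1 x = x} := by
  obtain ⟨m0, hd0⟩ := H.dich_of_ct h0
  obtain ⟨m1, hd1⟩ := H.dich_of_ct h1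
  rw [Bas.fix_pair hp]
  rw [measure_union ?disj (Bas.meas_cons_image hd1 1)]
  rw [Bas.measure_cons_image μ hμ hd0 0, Bas.measure_cons_image μ hμ hd1 1]
  case disj =>
    rw [Set.disjoint_left]
    rintro x ⟨y, _, rfl⟩ ⟨y', _, hy'⟩
    exact consW_ne_of_ne (by decide) y' y hy'

end Bas

lemma consW_eta2 (x : XX 2) : consW (x 0) (consW (x 1) (fun n => x (n+2))) = x := by
  funext n
  match n with
  | 0 => rfl
  | 1 => rfl
  | (k+2) => rfl

namespace Bas

variable (H : Bas)

lemma pair_left_MM {x : G2} (hx : x ∈ H.MM) :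
    ∃ z ∈ H.MM, Bas.IsPair z (H.a * x * H.a⁻¹) 1 := by
  obtain ⟨z', hz', hp⟩ := H.pair_right_MM x hx
  refine ⟨H.b * z' * H.b⁻¹, H.conj_MM hz' H.b_mem_BB, ?_, ?_⟩
  · intro y
    show H.b (z' (H.b⁻¹ (consW 0 y))) = _
    rw [H.ib0, hp.2, H.hb1]
    rfl
  · intro y
    show H.b (z' (H.b⁻¹ (consW 1 y))) = _
    rw [H.ib1, hp.1, H.hb0]

lemma pair_both_MM {x y : G2} (hx : x ∈ H.MM) (hy : y ∈ H.MM) :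
    ∃ z ∈ H.MM, Bas.IsPair z (H.a * x * H.a⁻¹) y := by
  obtain ⟨z1, hz1, hp1⟩ := H.pair_left_MM hx
  obtain ⟨z2, hz2, hp2⟩ := H.pair_right_MM y hy
  refine ⟨z1 * z2, mul_mem hz1 hz2, ?_⟩
  have hq := hp1.mul hp2
  rw [show (H.a * x * H.a⁻¹) * 1 = H.a * x * H.a⁻¹ by group,
    show (1:G2) * y = y by group] at hq
  exact hq

lemma cc_fixfree : {x : XX 2 | H.cc x = x} = (∅ : Set (XX 2)) := by
  ext x
  simp only [Set.mem_setOf_eq, Set.mem_empty_iff_false, iff_false]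
  intro hx
  have he : H.cc (consW (x 0) (consW (x 1) (fun n => x (n+2)))) =
      consW (x 0) (consW (x 1) (fun n => x (n+2))) := by
    rw [consW_eta2]; exact hx
  rcases hfin2 (x 0) with h0 | h0 <;> rcases hfin2 (x 1) with h1 | h1 <;> rw [h0, h1] at he
  · rw [show H.cc (consW 0 (consW 0 (fun n => x (n+2)))) =
        consW 0 (consW 1 (H.b (fun n => x (n+2)))) from by
        show H.b (H.a (H.b⁻¹ (H.a⁻¹ (consW 0 (consW 0 (fun n => x (n+2))))))) = _
        rw [H.ia0, H.ib0, H.ha1, H.hb1, H.ia0, H.hb0, H.ha1]] at he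
    exact absurd ((consW_inj (consW_inj he).2).1) (by decide)
  · rw [show H.cc (consW 0 (consW 1 (fun n => x (n+2)))) =
        consW 0 (consW 0 (H.a (H.b⁻¹ (fun n => x (n+2))))) from by
        show H.b (H.a (H.b⁻¹ (H.a⁻¹ (consW 0 (consW 1 (fun n => x (n+2))))))) = _
        rw [H.ia0, H.ib0, H.ha1, H.hb1, H.ia1, H.hb1, H.ha0]] at he
    exact absurd ((consW_inj (consW_inj he).2).1) (by decide)
  · rw [show H.cc (consW 1 (consW 0 (fun n => x (n+2)))) =
        consW 1 (consW 1 (H.a⁻¹ (fun n => x (n+2)))) from by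
        show H.b (H.a (H.b⁻¹ (H.a⁻¹ (consW 1 (consW 0 (fun n => x (n+2))))))) = _
        rw [H.ia1, H.ib1, H.ha0, H.hb0, H.ib0]] at he
    exact absurd ((consW_inj (consW_inj he).2).1) (by decide)
  · rw [show H.cc (consW 1 (consW 1 (fun n => x (n+2)))) =
        consW 1 (consW 0 (fun n => x (n+2))) from by
        show H.b (H.a (H.b⁻¹ (H.a⁻¹ (consW 1 (consW 1 (fun n => x (n+2))))))) = _
        rw [H.ia1, H.ib1, H.ha0, H.hb0, H.ib1]] at he
    exact absurd ((consW_inj (consW_inj he).2).1) (by decide)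

lemma val_one (μ : Measure (XX 2))
    (hμ : ∀ w : List (Fin 2), μ (Cyl w) = (1 / (2:ENNReal)) ^ w.length) :
    μ {x : XX 2 | (1 : G2) x = x} = 1 := by
  have h1 : {x : XX 2 | (1 : G2) x = x} = Set.univ := by
    ext x; simp only [Set.mem_setOf_eq, Set.mem_univ, iff_true]; rfl
  rw [h1, ← Cyl_nil, hμ]
  simp

lemma realize (μ : Measure (XX 2))
    (hμ : ∀ w : List (Fin 2), μ (Cyl w) = (1 / (2:ENNReal)) ^ w.length) :
    ∀ n k : ℕ, k ≤ 2 ^ n →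
      ∃ g ∈ H.MM, μ {x : XX 2 | g x = x} = (k : ENNReal) * (1 / 2) ^ n := by
  intro n
  induction n with
  | zero =>
    intro k hk
    interval_cases k
    · exact ⟨H.cc, H.cc_mem_MM, by rw [H.cc_fixfree]; simp⟩
    · exact ⟨1, one_mem _, by rw [Bas.val_one μ hμ]; simp⟩
  | succ n ih =>
    intro k hk
    have hctA : H.CT H.a := H.ct_of_nuc H.mem_a
    by_cases hk2 : k ≤ 2 ^ n
    · obtain ⟨g0, hg0, hv0⟩ := ih k hk2
      obtain ⟨z, hz, hp⟩ := H.pair_both_MM hg0 H.cc_mem_MM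
      refine ⟨z, hz, ?_⟩
      have hctg0 : H.CT g0 := H.ct_closure _ (H.MM_le_BB hg0)
      have hct1 : H.CT (H.a * g0 * H.a⁻¹) :=
        H.ct_mul (H.ct_mul hctA hctg0) (H.ct_inv hctA)
      have hctc : H.CT H.cc := H.ct_closure _ H.cc_mem_BB
      rw [H.pair_measure μ hμ hp hct1 hctc]
      rw [H.val_conj μ hμ hctg0 hctA, hv0, H.cc_fixfree]
      rw [show μ (∅ : Set (XX 2)) = 0 from measure_empty]
      ring
    · push_neg at hk2
      have hk'le : k - 2 ^ n ≤ 2 ^ n := by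
        have := pow_succ 2 n
        omega
      obtain ⟨g1, hg1, hv1⟩ := ih (k - 2 ^ n) hk'le
      obtain ⟨z, hz, hp⟩ := H.pair_both_MM (one_mem _) hg1
      refine ⟨z, hz, ?_⟩
      have hctg1 : H.CT g1 := H.ct_closure _ (H.MM_le_BB hg1)
      rw [show H.a * 1 * H.a⁻¹ = (1:G2) from by group] at hp
      rw [H.pair_measure μ hμ hp (H.ct_of_nuc H.mem_one) hctg1, Bas.val_one μ hμ, hv1]
      have h2 : (2:ENNReal) ^ n * (1 / 2) ^ n = 1 := by
        rw [← mul_pow]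
        rw [show (2:ENNReal) * (1/2) = 1 from by
          rw [one_div, ENNReal.mul_inv_cancel (by norm_num) (by norm_num)]]
        simp
      have hksplit : (k : ENNReal) = 2 ^ n + ((k - 2 ^ n : ℕ) : ENNReal) := by
        have hkk : k = 2 ^ n + (k - 2 ^ n) := by omega
        nth_rewrite 1 [hkk]
        push_cast
        ring
      rw [hksplit]
      calc (1/2 : ENNReal) * 1 + (1/2) * (((k - 2 ^ n : ℕ) : ENNReal) * (1/2) ^ n)
          = (2 ^ n * (1/2) ^ n) * (1/2) +
            ((k - 2 ^ n : ℕ) : ENNReal) * (1/2) ^ n * (1/2) := by rw [h2]; ring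
        _ = ((2:ENNReal) ^ n + ((k - 2 ^ n : ℕ) : ENNReal)) * (1/2) ^ (n+1) := by ring

end Bas

lemma toReal_helper (c n : ℕ) :
    ((c : ENNReal) * (1 / 2) ^ n).toReal = (c : ℝ) / 2 ^ n := by
  rw [ENNReal.toReal_mul, ENNReal.toReal_pow]
  have h1 : ((1 / 2 : ENNReal)).toReal = (1/2 : ℝ) := by
    rw [one_div, ENNReal.toReal_inv]
    norm_num
  rw [h1]
  simp only [ENNReal.toReal_natCast]
  rw [div_pow, one_pow, div_eq_mul_inv, div_eq_mul_inv]
  ring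

end S15


theorem stmt_15 (μ : Measure (XX 2))
    (hμ : ∀ w : List (Fin 2), μ (Cyl w) = (1 / (2 : ENNReal)) ^ w.length)
    (a b : XX 2 ≃ᵢ XX 2)
    (ha0 : ∀ x : XX 2, a (consW 0 x) = consW 0 x)
    (ha1 : ∀ x : XX 2, a (consW 1 x) = consW 1 (b x))
    (hb0 : ∀ x : XX 2, b (consW 0 x) = consW 1 x)
    (hb1 : ∀ x : XX 2, b (consW 1 x) = consW 0 (a x)) :
    {t : ℝ | ∃ g ∈ Subgroup.closure {a, b},
        (μ {x : XX 2 | (g : XX 2 ≃ᵢ XX 2) x = x}).toReal = t} =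
      {t : ℝ | 0 ≤ t ∧ t ≤ 1 ∧ ∃ p n : ℕ, t = (p : ℝ) / 2 ^ n} := by
  have huniv : μ Set.univ = 1 := by
    rw [← S15.Cyl_nil, hμ]
    simp
  set H : S15.Bas := ⟨a, b, ha0, ha1, hb0, hb1⟩ with hH
  ext t
  simp only [Set.mem_setOf_eq]
  constructor
  · rintro ⟨g, hg, rfl⟩
    have hct : H.CT g := H.ct_closure g hg
    obtain ⟨m, hd⟩ := H.dich_of_ct hct
    have hfm := S15.Bas.fix_measure μ hμ hd
    refine ⟨ENNReal.toReal_nonneg, ?_, (S15.Bas.FSet g m).card, m, ?_⟩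
    · calc (μ {x : XX 2 | g x = x}).toReal
          ≤ (μ Set.univ).toReal := by
            apply ENNReal.toReal_mono
            · rw [huniv]; exact ENNReal.one_ne_top
            · exact measure_mono (Set.subset_univ _)
        _ = 1 := by rw [huniv]; rfl
    · rw [hfm, S15.toReal_helper]
  · rintro ⟨ht0, ht1, p, n, rfl⟩
    have hp : p ≤ 2 ^ n := by
      by_contra hgt
      push_neg at hgt
      have h2 : (1 : ℝ) < (p : ℝ) / 2 ^ n := by
        rw [lt_div_iff₀ (by positivity)]
        rw [one_mul]
        exact_mod_cast hgt
      linarith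
    obtain ⟨g, hg, hval⟩ := H.realize μ hμ n p hp
    exact ⟨g, H.MM_le_BB hg, by rw [hval, S15.toReal_helper]⟩
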